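/- arXiv:1109.4675 — 7 statements merged into one kernel-verified Lean document; each statement's English description precedes it below -/
import Mathlib

section
/- Let G be a graph on n vertices and let C = v_1 v_2 ... v_k v_1 be a circular sequence of distinct vertices such that for each i (indices mod k), either v_i v_{i+1} is an edge of G or d(v_i) + d(v_{i+1}) >= n. Then G contains a cycle whose vertex set contains {v_1, ..., v_k}. -/
open SimpleGraph
namespace OCproof
variable {V : Type*}

def mkWalk (G : SimpleGraph V) : (a : V) → (l : List V) → List.Chain G.Adj a l →
    G.Walk a (l.getLastD a)
  | _, [], _ => Walk.nil
  | a, b :: t, h =>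
    (Walk.cons (List.chain_cons.mp h).1 (mkWalk G b t (List.chain_cons.mp h).2)).copy rfl
      (List.getLastD_cons (a := a) (b := b) (l := t)).symm

@[simp] lemma support_mkWalk (G : SimpleGraph V) :
    ∀ (a : V) (l : List V) (h : List.Chain G.Adj a l), (mkWalk G a l h).support = a :: l
  | _, [], _ => rfl
  | a, b :: t, h => by
    rw [mkWalk, Walk.support_copy, Walk.support_cons]
    exact congrArg (a :: ·) (support_mkWalk G b t _)

lemma edge_start {G : SimpleGraph V} {u w y : V} (p : G.Walk u w) (hp : p.support.Nodup)
    (he : s(u, y) ∈ p.edges) : p.support.tail.head? = some y := by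
  cases p with
  | nil => simp at he
  | @cons _ b _ hadj q =>
    rw [Walk.edges_cons, List.mem_cons] at he
    rcases he with he | he
    · have hyb : y = b := by
        rcases Sym2.eq_iff.mp he with ⟨-, h⟩ | ⟨h1, _⟩
        · exact h
        · exact absurd h1 hadj.ne
      subst hyb
      rw [Walk.support_cons, List.tail_cons, q.support_eq_cons]
      rfl
    · exfalso
      have hu : u ∈ q.support := Walk.fst_mem_support_of_mem_edges q he
      rw [Walk.support_cons, List.nodup_cons] at hp
      exact hp.1 hu

lemma mem_tail_support_of_closed {G : SimpleGraph V} {a : V} (c : G.Walk a a) (hnil : ¬c.Nil)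
    {t : V} (ht : t ∈ c.support) : t ∈ c.support.tail := by
  cases c with
  | nil => exact absurd (by simp) hnil
  | @cons _ b _ hadj q =>
    rw [Walk.support_cons, List.tail_cons]
    rw [Walk.support_cons, List.mem_cons] at ht
    rcases ht with rfl | ht
    · exact q.end_mem_support
    · exact ht

lemma cycle_of_list {G : SimpleGraph V} {L : List V} (hc : L.Chain' G.Adj) (hnd : L.Nodup)
    (hlen : 3 ≤ L.length)
    (hcl : ∀ x ∈ L.getLast?, ∀ y ∈ L.head?, G.Adj x y) :
    ∃ (a : V) (c : G.Walk a a), c.IsCycle ∧ ∀ x ∈ L, x ∈ c.support := by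
  obtain ⟨a, b, t, rfl, ht⟩ : ∃ a b t, L = a :: b :: t ∧ t ≠ [] := by
    match L, hlen with
    | (a :: b :: c :: t), _ => exact ⟨a, b, c :: t, rfl, by simp⟩
  have hbt : (b :: t) ≠ [] := by simp
  have hadj_last : G.Adj ((b :: t).getLast hbt) a := by
    apply hcl _ _ a (by simp)
    rw [List.getLast?_eq_getLast_of_ne_nil (by simp : (a :: b :: t) ≠ [])]
    exact congrArg some (List.getLast_cons (a := a) hbt).symm
  have hchain2 : List.Chain' G.Adj ((b :: t) ++ [a]) := by
    refine (List.IsChain.tail hc).append (List.isChain_singleton a) ?_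
    intro x hx y hy
    simp only [List.tail_cons] at hx
    simp only [List.head?_cons, Option.mem_def, Option.some.injEq] at hy
    subst hy
    rw [List.getLast?_eq_getLast_of_ne_nil hbt] at hx
    simp only [Option.mem_def, Option.some.injEq] at hx
    subst hx
    exact hadj_last
  have hch : List.Chain G.Adj b (t ++ [a]) := hchain2
  have hgl : (t ++ [a]).getLastD b = a := by
    simp [List.getLastD_eq_getLast?]
  set p : G.Walk b a := (mkWalk G b (t ++ [a]) hch).copy rfl hgl with hpdef
  have hsup : p.support = b :: (t ++ [a]) := by
    rw [hpdef, Walk.support_copy, support_mkWalk]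
  have hab : G.Adj a b := (List.isChain_cons_cons.mp hc).1
  have hperm : List.Perm (b :: (t ++ [a])) (a :: b :: t) :=
    List.perm_append_comm (l₁ := b :: t) (l₂ := [a])
  have hnd2 : (b :: (t ++ [a])).Nodup := hperm.nodup_iff.mpr hnd
  have hedge : s(a, b) ∉ p.edges := by
    intro hmem
    have hrev : s(a, b) ∈ p.reverse.edges := by
      rw [Walk.edges_reverse]; exact List.mem_reverse.mpr hmem
    have hrevnd : p.reverse.support.Nodup := by
      rw [Walk.support_reverse, hsup]; exact List.nodup_reverse.mpr hnd2
    have hstart := edge_start p.reverse hrevnd hrev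
    obtain ⟨c0, cs, hcs⟩ := List.exists_cons_of_ne_nil (l := t.reverse) (by simpa using ht)
    have hsuprev : p.reverse.support = a :: (c0 :: (cs ++ [b])) := by
      rw [Walk.support_reverse, hsup]
      simp [hcs]
    rw [hsuprev] at hstart
    simp only [List.tail_cons, List.head?_cons, Option.some.injEq] at hstart
    have hbmem : b ∈ t := by
      have : c0 ∈ t.reverse := by rw [hcs]; exact List.mem_cons_self
      rw [hstart] at this
      exact List.mem_reverse.mp this
    have : b ∉ t := by
      have := hnd
      simp only [List.nodup_cons] at this
      exact this.2.1
    exact this hbmem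
  refine ⟨a, Walk.cons hab p, ?_, ?_⟩
  · exact (Walk.cons_isCycle_iff p hab).mpr ⟨(Walk.isPath_def p).mpr (hsup ▸ hnd2), hedge⟩
  · intro x hx
    rw [Walk.support_cons, hsup]
    rcases List.mem_cons.mp hx with rfl | hx
    · exact List.mem_cons_self
    · simp only [List.mem_cons, List.mem_append] at hx ⊢
      tauto

lemma degree_mono [Fintype V] {G K : SimpleGraph V} [DecidableRel G.Adj] [DecidableRel K.Adj]
    (h : G ≤ K) (x : V) : G.degree x ≤ K.degree x := by
  apply Finset.card_le_card
  intro y hy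
  rw [SimpleGraph.mem_neighborFinset] at *
  exact h hy

lemma surgery [Fintype V] [DecidableEq V] (K : SimpleGraph V) [DecidableRel K.Adj]
    {u w : V} (P : List V) (hP : P.Chain' K.Adj) (hnd : P.Nodup)
    (hhead : P.head? = some u) (hlast : P.getLast? = some w)
    (hlen : 3 ≤ P.length)
    (hdeg : Fintype.card V ≤ K.degree u + K.degree w) :
    ∃ (a : V) (c : K.Walk a a), c.IsCycle ∧ ∀ t ∈ P, t ∈ c.support := by
  classical
  set r := P.length with hr
  have hrpos : 0 < r := by omega
  set p : ℕ → V := fun i => P.getD i u with hp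
  have hget : ∀ i, i < r → P[i]? = some (p i) := by
    intro i hi
    rw [hp]
    simp [List.getD_eq_getElem?_getD, List.getElem?_eq_getElem hi]
  have hp0 : p 0 = u := by
    have := hget 0 hrpos
    rw [← List.head?_eq_getElem?] at this
    rw [hhead] at this
    exact (Option.some_injective _ this).symm
  have hpr : p (r - 1) = w := by
    have := hget (r - 1) (by omega)
    rw [show P[r-1]? = P.getLast? from (List.getLast?_eq_getElem? (l := P)).symm] at this
    rw [hlast] at this
    exact (Option.some_injective _ this).symm
  have hpinj : ∀ i j, i < r → j < r → p i = p j → i = j := by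
    intro i j hi hj hEq
    have h1 := hget i hi
    have h2 := hget j hj
    rw [List.getElem?_eq_getElem hi] at h1
    rw [List.getElem?_eq_getElem hj] at h2
    have : P[i]'hi = P[j]'hj := by
      rw [Option.some_inj.mp h1, Option.some_inj.mp h2]; exact hEq
    exact (List.Nodup.getElem_inj_iff hnd).mp this
  have hpmem : ∀ i, i < r → p i ∈ P := by
    intro i hi
    have := hget i hi
    rw [List.getElem?_eq_getElem hi] at this
    rw [← Option.some_inj.mp this]
    exact List.getElem_mem hi
  by_cases hcase1 : ∃ z, z ∉ P ∧ K.Adj u z ∧ K.Adj z w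
  · obtain ⟨z, hzP, hz1, hz2⟩ := hcase1
    have hchain : List.Chain' K.Adj (P ++ [z]) := by
      refine hP.append (List.isChain_singleton z) ?_
      intro x hx y hy
      simp only [List.head?_cons, Option.mem_def, Option.some.injEq] at hy
      subst hy
      rw [hlast] at hx
      simp only [Option.mem_def, Option.some.injEq] at hx
      subst hx
      exact hz2.symm
    have hnd2 : (P ++ [z]).Nodup := by
      simp [List.nodup_append, hnd, hzP]
      rintro a ha rfl; exact hzP ha
    have hlen2 : 3 ≤ (P ++ [z]).length := by
      rw [List.length_append]; omega
    have hcl' : ∀ x ∈ (P ++ [z]).getLast?, ∀ y ∈ (P ++ [z]).head?, K.Adj x y := by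
      intro x hx y hy
      rw [List.getLast?_concat] at hx
      simp only [Option.mem_def, Option.some.injEq] at hx
      subst hx
      have : (P ++ [z]).head? = some u := by
        obtain ⟨u', P', rfl⟩ : ∃ u' P', P = u' :: P' := by
          cases P with
          | nil => simp at hhead
          | cons u' P' => exact ⟨u', P', rfl⟩
        simp only [List.head?_cons, Option.some.injEq] at hhead
        simp [hhead]
      rw [this] at hy
      simp only [Option.mem_def, Option.some.injEq] at hy
      subst hy
      exact hz1.symm
    obtain ⟨a, c, hcyc, hsup⟩ := cycle_of_list hchain hnd2 hlen2 hcl'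
    exact ⟨a, c, hcyc, fun t ht => hsup t (by simp [ht])⟩
  by_cases hcase2 : ∃ i, i + 1 < r ∧ K.Adj w (p i) ∧ K.Adj u (p (i + 1))
  · obtain ⟨i, hi1, haw, hau⟩ := hcase2
    set L : List V := P.take (i + 1) ++ (P.drop (i + 1)).reverse with hL
    have hperm : List.Perm L P := by
      have h1 : List.Perm L (P.take (i + 1) ++ P.drop (i + 1)) :=
        List.Perm.append_left _ (List.reverse_perm _)
      rwa [List.take_append_drop] at h1
    have htake_last : (P.take (i + 1)).getLast? = some (p i) := by
      rw [List.getLast?_eq_getElem?]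
      have hlt : (P.take (i + 1)).length = i + 1 := by
        rw [List.length_take]; omega
      rw [hlt]
      simp only [Nat.add_sub_cancel]
      rw [List.getElem?_take_of_lt (by omega)]
      exact hget i (by omega)
    have hdrop_head : (P.drop (i + 1)).head? = some (p (i + 1)) := by
      rw [List.head?_eq_getElem?, List.getElem?_drop]
      exact hget (i + 1) hi1
    have hdrop_last : (P.drop (i + 1)).getLast? = some w := by
      rw [List.getLast?_eq_getElem?, List.getElem?_drop, List.length_drop]
      have hir : i + 1 < P.length := by rw [← hr]; omega
      have heq : i + 1 + (P.length - (i + 1) - 1) = P.length - 1 := by omega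
      rw [heq, ← List.getLast?_eq_getElem?]
      exact hlast
    have hchain : List.Chain' K.Adj L := by
      refine (hP.take (i + 1)).append ?_ ?_
      · rw [List.isChain_reverse]
        exact (hP.drop (i + 1)).imp fun _ _ h => h.symm
      · intro x hx y hy
        rw [htake_last] at hx
        rw [List.head?_reverse, hdrop_last] at hy
        simp only [Option.mem_def, Option.some.injEq] at hx hy
        subst hx; subst hy
        exact haw.symm
    have hnd2 : L.Nodup := hperm.nodup_iff.mpr hnd
    have hlen2 : 3 ≤ L.length := by rw [hperm.length_eq]; omega
    have hcl' : ∀ x ∈ L.getLast?, ∀ y ∈ L.head?, K.Adj x y := by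
      intro x hx y hy
      have hdropne : (P.drop (i + 1)).reverse ≠ [] := by
        intro hcon
        have := hdrop_head
        rw [List.reverse_eq_nil_iff.mp hcon] at this
        simp at this
      rw [hL, List.getLast?_append_of_ne_nil _ hdropne] at hx
      rw [List.getLast?_reverse, hdrop_head] at hx
      have htakene : P.take (i + 1) ≠ [] := by
        intro hcon
        have := htake_last
        rw [hcon] at this
        simp at this
      have hheadL : L.head? = some u := by
        rw [hL, List.head?_append_of_ne_nil _ htakene]
        rw [List.head?_eq_getElem?, List.getElem?_take_of_lt (by omega : 0 < i + 1)]
        rw [← List.head?_eq_getElem?]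
        exact hhead
      rw [hheadL] at hy
      simp only [Option.mem_def, Option.some.injEq] at hx hy
      subst hx; subst hy
      exact hau.symm
    obtain ⟨a, c, hcyc, hsup⟩ := cycle_of_list hchain hnd2 hlen2 hcl'
    exact ⟨a, c, hcyc, fun t ht => hsup t (hperm.mem_iff.mpr ht)⟩
  · exfalso
    push_neg at hcase1 hcase2
    have hgetp : ∀ (i : Fin P.length), p i.1 = P.get i := by
      intro i
      have := hget i.1 i.2
      rw [List.getElem?_eq_getElem i.2] at this
      simp only [Option.some.injEq] at this
      rw [← this, List.get_eq_getElem]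
    set Pf := P.toFinset with hPf
    have hPfcard : Pf.card = r := by rw [hPf, List.toFinset_card_of_nodup hnd]
    set Nu := K.neighborFinset u with hNu
    set Nw := K.neighborFinset w with hNw
    have hdisj : Disjoint (Nu \ Pf) (Nw \ Pf) := by
      rw [Finset.disjoint_left]
      intro z hz1 hz2
      simp only [Finset.mem_sdiff, hNu, hNw, hPf, SimpleGraph.mem_neighborFinset,
        List.mem_toFinset] at hz1 hz2
      exact hcase1 z hz1.2 hz1.1 hz2.1.symm
    have hoffcard : (Nu \ Pf).card + (Nw \ Pf).card ≤ Fintype.card V - r := by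
      rw [← Finset.card_union_of_disjoint hdisj]
      have hsub : (Nu \ Pf) ∪ (Nw \ Pf) ⊆ Finset.univ \ Pf := by
        intro z hz
        simp only [Finset.mem_union, Finset.mem_sdiff] at hz ⊢
        exact ⟨Finset.mem_univ z, by rcases hz with h | h; exacts [h.2, h.2]⟩
      calc ((Nu \ Pf) ∪ (Nw \ Pf)).card ≤ (Finset.univ \ Pf).card := Finset.card_le_card hsub
        _ = Fintype.card V - r := by
          rw [Finset.card_sdiff_of_subset (Finset.subset_univ _), Finset.card_univ, hPfcard]
    set Iu := (Finset.range r).filter (fun i => K.Adj u (p i)) with hIu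
    set Iw := (Finset.range r).filter (fun i => K.Adj w (p i)) with hIw
    have himgu : Iu.image p = Nu ∩ Pf := by
      ext x
      simp only [hIu, Finset.mem_image, Finset.mem_filter, Finset.mem_range, Finset.mem_inter,
        hNu, hPf, SimpleGraph.mem_neighborFinset, List.mem_toFinset]
      constructor
      · rintro ⟨i, ⟨hi, ha⟩, rfl⟩
        exact ⟨ha, hpmem i hi⟩
      · rintro ⟨ha, hx⟩
        obtain ⟨i, rfl⟩ := List.mem_iff_get.mp hx
        exact ⟨i.1, ⟨i.2, by rw [hgetp i]; exact ha⟩, hgetp i⟩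
    have himgw : Iw.image p = Nw ∩ Pf := by
      ext x
      simp only [hIw, Finset.mem_image, Finset.mem_filter, Finset.mem_range, Finset.mem_inter,
        hNw, hPf, SimpleGraph.mem_neighborFinset, List.mem_toFinset]
      constructor
      · rintro ⟨i, ⟨hi, ha⟩, rfl⟩
        exact ⟨ha, hpmem i hi⟩
      · rintro ⟨ha, hx⟩
        obtain ⟨i, rfl⟩ := List.mem_iff_get.mp hx
        exact ⟨i.1, ⟨i.2, by rw [hgetp i]; exact ha⟩, hgetp i⟩
    have hinjf : ∀ s : Finset ℕ, s ⊆ Finset.range r → (s.image p).card = s.card := by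
      intro s hs
      apply Finset.card_image_of_injOn
      intro i hi j hj hEq
      exact hpinj i j (Finset.mem_range.mp (hs hi)) (Finset.mem_range.mp (hs hj)) hEq
    have hIucard : (Nu ∩ Pf).card = Iu.card := by
      rw [← himgu]; exact hinjf Iu (Finset.filter_subset _ _)
    have hIwcard : (Nw ∩ Pf).card = Iw.card := by
      rw [← himgw]; exact hinjf Iw (Finset.filter_subset _ _)
    set Jw := Iw.image (· + 1) with hJw
    have hJcard : Jw.card = Iw.card :=
      Finset.card_image_of_injective _ (fun a b h => by omega)
    have hJsub : ∀ j ∈ Jw, j < r ∧ 0 < j ∧ K.Adj w (p (j - 1)) := by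
      intro j hj
      simp only [hJw, Finset.mem_image, hIw, Finset.mem_filter, Finset.mem_range] at hj
      obtain ⟨i, ⟨hi, ha⟩, rfl⟩ := hj
      have hir : i ≠ r - 1 := by
        intro hcon
        rw [hcon, hpr] at ha
        exact K.irrefl ha
      exact ⟨by omega, by omega, by simpa using ha⟩
    have hdisj2 : Disjoint Iu Jw := by
      rw [Finset.disjoint_left]
      intro j hju hjw
      obtain ⟨hjr, hj0, haw⟩ := hJsub j hjw
      have hau : K.Adj u (p j) := (Finset.mem_filter.mp hju).2
      have := hcase2 (j - 1) (by omega) haw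
      rw [show j - 1 + 1 = j by omega] at this
      exact this hau
    have h0u : 0 ∉ Iu := by
      simp only [hIu, Finset.mem_filter]
      rintro ⟨-, h⟩
      exact K.irrefl (by rwa [hp0] at h)
    have hsub2 : Iu ∪ Jw ⊆ (Finset.range r).erase 0 := by
      intro j hj
      rw [Finset.mem_erase, Finset.mem_range]
      rcases Finset.mem_union.mp hj with h | h
      · refine ⟨?_, Finset.mem_range.mp (Finset.mem_filter.mp h).1⟩
        rintro rfl; exact h0u h
      · obtain ⟨hjr, hj0, -⟩ := hJsub j h
        exact ⟨by omega, hjr⟩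
    have hon : Iu.card + Iw.card ≤ r - 1 := by
      rw [← hJcard, ← Finset.card_union_of_disjoint hdisj2]
      calc (Iu ∪ Jw).card ≤ ((Finset.range r).erase 0).card := Finset.card_le_card hsub2
        _ = r - 1 := by
          rw [Finset.card_erase_of_mem (Finset.mem_range.mpr hrpos), Finset.card_range]
    have hNucard : Nu.card = (Nu ∩ Pf).card + (Nu \ Pf).card :=
      (Finset.card_inter_add_card_sdiff _ _).symm
    have hNwcard : Nw.card = (Nw ∩ Pf).card + (Nw \ Pf).card :=
      (Finset.card_inter_add_card_sdiff _ _).symm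
    have hrn : r ≤ Fintype.card V := by rw [← hPfcard]; exact Finset.card_le_univ Pf
    have hdu : K.degree u = Nu.card := rfl
    have hdw : K.degree w = Nw.card := rfl
    rw [hdu, hdw] at hdeg
    rw [hIucard] at hNucard
    rw [hIwcard] at hNwcard
    omega


lemma path_of_cycle_edge {G : SimpleGraph V} {x y : V} (c : G.Walk x x) (hc : c.IsCycle)
    (he : s(x, y) ∈ c.edges) :
    ∃ p : G.Walk y x, p.IsPath ∧ s(x, y) ∉ p.edges ∧ 2 ≤ p.length ∧
      ∀ t ∈ c.support, t ∈ p.support := by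
  have h3 := hc.three_le_length
  cases c with
  | nil => simp at he
  | @cons _ b _ hadj q =>
    have hq := (Walk.cons_isCycle_iff q hadj).mp hc
    rw [Walk.length_cons] at h3
    rw [Walk.edges_cons, List.mem_cons] at he
    by_cases hyb : y = b
    · subst hyb
      refine ⟨q, hq.1, hq.2, by omega, ?_⟩
      intro t ht
      rw [Walk.support_cons, List.mem_cons] at ht
      rcases ht with rfl | ht
      · exact q.end_mem_support
      · exact ht
    · have he' : s(x, y) ∈ q.edges := by
        rcases he with he | he
        · exfalso
          rcases Sym2.eq_iff.mp he with ⟨-, h⟩ | ⟨h1, -⟩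
          · exact hyb h
          · exact hadj.ne h1
        · exact he
      have hqlen : 2 ≤ q.length := by omega
      have hne : ¬ q.reverse.Nil := by
        rw [Walk.nil_iff_length_eq, Walk.length_reverse]
        omega
      obtain ⟨b₂, had2, r, hqr⟩ := Walk.not_nil_iff.mp hne
      have hqsupnd : q.support.Nodup := (Walk.isPath_def q).mp hq.1
      have hrevsupnd : q.reverse.support.Nodup := by
        rw [Walk.support_reverse]
        exact List.nodup_reverse.mpr hqsupnd
      have hrev_edge : s(x, y) ∈ q.reverse.edges := by
        rw [Walk.edges_reverse]; exact List.mem_reverse.mpr he'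
      have hstart := edge_start q.reverse hrevsupnd hrev_edge
      have hb2 : b₂ = y := by
        rw [hqr, Walk.support_cons, List.tail_cons, r.support_eq_cons] at hstart
        exact Option.some_injective _ hstart
      subst hb2
      have hrsup : q.reverse.support = x :: r.support := by
        rw [hqr, Walk.support_cons]
      have hxr : x ∉ r.support := by
        have := hrevsupnd
        rw [hrsup, List.nodup_cons] at this
        exact this.1
      have hrnd : r.support.Nodup := by
        have := hrevsupnd
        rw [hrsup, List.nodup_cons] at this
        exact this.2
      set pfin : G.Walk b₂ x := r.append (Walk.cons hadj.symm Walk.nil) with hpfin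
      have hpsup : pfin.support = r.support ++ [x] := by
        rw [hpfin, Walk.support_append, Walk.support_cons, Walk.support_nil, List.tail_cons]
      refine ⟨pfin, ?_, ?_, ?_, ?_⟩
      · rw [Walk.isPath_def, hpsup]
        simp [List.nodup_append, hrnd, hxr]
        rintro a ha rfl; exact hxr ha
      · rw [hpfin, Walk.edges_append, Walk.edges_cons, Walk.edges_nil]
        intro hmem
        rcases List.mem_append.mp hmem with hmem | hmem
        · exact hxr (Walk.fst_mem_support_of_mem_edges r hmem)
        · simp only [List.mem_singleton] at hmem
          rcases Sym2.eq_iff.mp hmem with ⟨h1, -⟩ | ⟨-, h2⟩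
          · exact hadj.ne h1
          · exact hyb h2
      · rw [hpfin, Walk.length_append, Walk.length_cons, Walk.length_nil]
        have : q.reverse.length = r.length + 1 := by rw [hqr, Walk.length_cons]
        rw [Walk.length_reverse] at this
        omega
      · intro t ht
        rw [Walk.support_cons, List.mem_cons] at ht
        have hxmem : x ∈ pfin.support := by rw [hpsup]; simp
        rcases ht with rfl | ht
        · exact hxmem
        · have : t ∈ q.reverse.support := by
            rw [Walk.support_reverse]; exact List.mem_reverse.mpr ht
          rw [hrsup, List.mem_cons] at this
          rcases this with rfl | hthis
          · exact hxmem
          · rw [hpsup]; exact List.mem_append_left _ hthis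


lemma removeEdges [Fintype V] [DecidableEq V] (G : SimpleGraph V) [DecidableRel G.Adj] :
    ∀ F : Finset (Sym2 V),
      (∀ e ∈ F, ∀ x y : V, e = s(x, y) → x ≠ y ∧ Fintype.card V ≤ G.degree x + G.degree y) →
      ∀ (T : List V) (a : V) (c : (G ⊔ SimpleGraph.fromEdgeSet ↑F).Walk a a), c.IsCycle →
        (∀ t ∈ T, t ∈ c.support) →
        ∃ (a' : V) (c' : G.Walk a' a'), c'.IsCycle ∧ ∀ t ∈ T, t ∈ c'.support := by
  intro F
  induction F using Finset.strongInduction with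
  | _ F ih =>
  intro hF T a c hc hT
  rcases F.eq_empty_or_nonempty with rfl | ⟨e, he⟩
  · have hsub : ∀ e' ∈ c.edges, e' ∈ G.edgeSet := by
      intro e' he'
      have h1 := c.edges_subset_edgeSet he'
      simpa [SimpleGraph.edgeSet_sup] using h1
    exact ⟨a, c.transfer G hsub, hc.transfer _,
      fun t ht => by rw [Walk.support_transfer]; exact hT t ht⟩
  · induction e using Sym2.ind with
    | _ x y =>
    obtain ⟨hxy, hdegG⟩ := hF _ he x y rfl
    set K := G ⊔ SimpleGraph.fromEdgeSet ↑(F.erase s(x, y)) with hK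
    haveI : DecidableRel K.Adj := Classical.decRel _
    have hEdge : ∀ e' ∈ (G ⊔ SimpleGraph.fromEdgeSet (↑F : Set (Sym2 V))).edgeSet,
        e' ≠ s(x, y) → e' ∈ K.edgeSet := by
      intro e' he' hne
      rw [SimpleGraph.edgeSet_sup, SimpleGraph.edgeSet_fromEdgeSet] at he' ⊢
      rcases he' with h | ⟨hF', hd⟩
      · exact Or.inl h
      · refine Or.inr ⟨?_, hd⟩
        rw [Finset.coe_erase]
        exact ⟨hF', hne⟩
    have hFsub : ∀ e' ∈ F.erase s(x, y), ∀ x' y' : V, e' = s(x', y') →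
        x' ≠ y' ∧ Fintype.card V ≤ G.degree x' + G.degree y' :=
      fun e' he' => hF e' (Finset.mem_of_mem_erase he')
    have hss : F.erase s(x, y) ⊂ F := Finset.erase_ssubset he
    by_cases hec : s(x, y) ∈ c.edges
    · have hx : x ∈ c.support := Walk.fst_mem_support_of_mem_edges c hec
      set c₂ := c.rotate x hx with hc₂def
      have hc₂ : c₂.IsCycle := hc.rotate hx
      have hec₂ : s(x, y) ∈ c₂.edges := ((c.rotate_edges x hx).perm.mem_iff).mpr hec
      have hT₂ : ∀ t ∈ T, t ∈ c₂.support := by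
        intro t ht
        have h1 : t ∈ c.support.tail := mem_tail_support_of_closed c hc.not_nil (hT t ht)
        have h2 : t ∈ c₂.support.tail := ((c.support_rotate x hx).perm.mem_iff).mpr h1
        exact List.mem_of_mem_tail h2
      obtain ⟨pw, hpath, hnotedge, hlen2, hcov⟩ := path_of_cycle_edge c₂ hc₂ hec₂
      have htr : ∀ e' ∈ pw.edges, e' ∈ K.edgeSet := fun e' he' =>
        hEdge e' (pw.edges_subset_edgeSet he') (by rintro rfl; exact hnotedge he')
      set pk := pw.transfer K htr with hpk
      have hpksup : pk.support = pw.support := Walk.support_transfer pw htr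
      have hdegK : Fintype.card V ≤ K.degree y + K.degree x := by
        have h1 : G.degree x ≤ K.degree x := degree_mono le_sup_left x
        have h2 : G.degree y ≤ K.degree y := degree_mono le_sup_left y
        omega
      have hlenpk : pk.length = pw.length := by
        rw [← Walk.length_edges, ← Walk.length_edges, Walk.edges_transfer]
      obtain ⟨a', c', hcyc, hcov'⟩ := surgery K pk.support pk.isChain_adj_support
        (by rw [hpksup]; exact (Walk.isPath_def pw).mp hpath)
        (by rw [pk.support_eq_cons]; rfl)
        (by rw [List.getLast?_eq_getLast_of_ne_nil pk.support_ne_nil]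
            exact congrArg some pk.getLast_support)
        (by rw [Walk.length_support, hlenpk]; omega)
        hdegK
      exact ih (F.erase s(x, y)) hss hFsub T a' c' hcyc
        (fun t ht => hcov' t (by rw [hpksup]; exact hcov t (hT₂ t ht)))
    · have htr : ∀ e' ∈ c.edges, e' ∈ K.edgeSet := fun e' he' =>
        hEdge e' (c.edges_subset_edgeSet he') (by rintro rfl; exact hec he')
      exact ih (F.erase s(x, y)) hss hFsub T a (c.transfer K htr) (hc.transfer _)
        (fun t ht => by rw [Walk.support_transfer]; exact hT t ht)

end OCproof

theorem stmt_1 {V : Type*} [Fintype V] [DecidableEq V] (G : SimpleGraph V)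
    [DecidableRel G.Adj] (k : ℕ) (hk : 3 ≤ k) (v : ℕ → V)
    (hinj : ∀ i j, i < k → j < k → v i = v j → i = j)
    (hoc : ∀ i < k, G.Adj (v i) (v ((i + 1) % k)) ∨
      Fintype.card V ≤ G.degree (v i) + G.degree (v ((i + 1) % k))) :
    ∃ (a : V) (c : G.Walk a a), c.IsCycle ∧ ∀ i < k, v i ∈ c.support := by
  classical
  have hmodlt : ∀ i, i < k → (i + 1) % k < k := fun i _ => Nat.mod_lt _ (by omega)
  have hmodeq : ∀ i, i < k → (i + 1) % k = if i + 1 = k then 0 else i + 1 := by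
    intro i hi
    split
    · next h => rw [h, Nat.mod_self]
    · next h => exact Nat.mod_eq_of_lt (by omega)
  have hne : ∀ i, i < k → v i ≠ v ((i + 1) % k) := by
    intro i hi hEq
    have h1 := hinj _ _ hi (hmodlt i hi) hEq
    rw [hmodeq i hi] at h1
    split at h1 <;> omega
  set F : Finset (Sym2 V) :=
    ((Finset.range k).filter fun i => ¬G.Adj (v i) (v ((i + 1) % k))).image
      (fun i => s(v i, v ((i + 1) % k))) with hF
  set H := G ⊔ SimpleGraph.fromEdgeSet ↑F with hH
  have hHadj : ∀ i, i < k → H.Adj (v i) (v ((i + 1) % k)) := by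
    intro i hi
    rw [hH, SimpleGraph.sup_adj]
    by_cases hG : G.Adj (v i) (v ((i + 1) % k))
    · exact Or.inl hG
    · refine Or.inr ?_
      rw [SimpleGraph.fromEdgeSet_adj]
      refine ⟨?_, hne i hi⟩
      simp only [hF, Finset.coe_image, Set.mem_image, Finset.mem_coe, Finset.mem_filter,
        Finset.mem_range]
      exact ⟨i, ⟨hi, hG⟩, rfl⟩
  have hFprop : ∀ e ∈ F, ∀ x y : V, e = s(x, y) →
      x ≠ y ∧ Fintype.card V ≤ G.degree x + G.degree y := by
    intro e heF x y hexy
    simp only [hF, Finset.mem_image, Finset.mem_filter, Finset.mem_range] at heF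
    obtain ⟨i, ⟨hi, hnadj⟩, rfl⟩ := heF
    have hdeg := (hoc i hi).resolve_left hnadj
    have hvne := hne i hi
    rw [Sym2.eq_iff] at hexy
    rcases hexy with ⟨rfl, rfl⟩ | ⟨rfl, rfl⟩
    · exact ⟨hvne, hdeg⟩
    · exact ⟨hvne.symm, by omega⟩
  set L : List V := (List.range k).map v with hL
  have hLlen : L.length = k := by rw [hL, List.length_map, List.length_range]
  have hLget : ∀ i, i < k → L[i]? = some (v i) := by
    intro i hi
    rw [hL, List.getElem?_map, List.getElem?_range hi, Option.map_some]
  have hLnd : L.Nodup := by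
    rw [hL]
    exact List.Nodup.map_on
      (fun i hi j hj hEq => hinj i j (List.mem_range.mp hi) (List.mem_range.mp hj) hEq)
      (List.nodup_range (n := k))
  have hgetv : ∀ (i : ℕ) (h : i < L.length), L.get ⟨i, h⟩ = v i := by
    intro i h
    have h2 := hLget i (by omega)
    rw [List.getElem?_eq_getElem h] at h2
    simpa [List.get_eq_getElem] using h2
  have hchain : List.Chain' H.Adj L := by
    refine List.isChain_iff_getElem.mpr ?_
    intro i hilen
    rw [hLlen] at hilen
    have e1 := hgetv i (by omega); have e2 := hgetv (i + 1) (by omega)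
    simp only [List.get_eq_getElem] at e1 e2
    rw [e1, e2]
    have h1 := hHadj i (by omega)
    rwa [hmodeq i (by omega), if_neg (by omega)] at h1
  have hcl : ∀ x ∈ L.getLast?, ∀ y ∈ L.head?, H.Adj x y := by
    intro x hx y hy
    have h1 : L.getLast? = some (v (k - 1)) := by
      rw [List.getLast?_eq_getElem?, hLlen]
      exact hLget (k - 1) (by omega)
    have h2 : L.head? = some (v 0) := by
      rw [List.head?_eq_getElem?]
      exact hLget 0 (by omega)
    rw [h1] at hx
    rw [h2] at hy
    simp only [Option.mem_def, Option.some.injEq] at hx hy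
    subst hx; subst hy
    have h3 := hHadj (k - 1) (by omega)
    rwa [hmodeq _ (by omega), if_pos (by omega)] at h3
  obtain ⟨a, c, hcyc, hsup⟩ := OCproof.cycle_of_list hchain hLnd (by rw [hLlen]; omega) hcl
  obtain ⟨a', c', hcyc', hsup'⟩ := OCproof.removeEdges G F hFprop L a c hcyc hsup
  exact ⟨a', c', hcyc',
    fun i hi => hsup' _ (by rw [hL]; exact List.mem_map.mpr ⟨i, List.mem_range.mpr hi, rfl⟩)⟩
end

section
/- If G is a connected graph on n vertices that contains no heavy cycle, then G has at most two heavy vertices. -/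
open SimpleGraph Finset

namespace HeavyAux

variable {V : Type*} [Fintype V] [DecidableEq V] {G : SimpleGraph V}

lemma start_mem_tail_support {a : V} (c : G.Walk a a) (h : ¬ c.Nil) :
    a ∈ c.support.tail := by
  cases c with
  | nil => simp at h
  | cons h' q => simpa using q.end_mem_support

/-- Close a path `x → y` through an outside vertex `z` adjacent to both ends. -/
lemma closeCycle {x y z : V} (p : G.Walk x y) (hp : p.IsPath) (hxy : x ≠ y)
    (hz : z ∉ p.support) (h1 : G.Adj z x) (h2 : G.Adj y z) :
    ∃ c : G.Walk z z, c.IsCycle ∧ ∀ w ∈ p.support, w ∈ c.support := by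
  refine ⟨Walk.cons h1 (p.concat h2), ?_, ?_⟩
  · rw [Walk.cons_isCycle_iff]
    constructor
    · apply Walk.IsPath.mk'
      rw [Walk.support_concat]
      simp [List.concat_eq_append, List.nodup_append, hp.support_nodup, hz]
      exact fun a ha h => hz (h ▸ ha)
    · rw [Walk.edges_concat]
      simp only [List.concat_eq_append, List.mem_append, List.mem_singleton]
      rintro (hmem | heq)
      · exact hz (p.fst_mem_support_of_mem_edges (by rwa [Sym2.eq_swap] at hmem))
      · rw [Sym2.eq_iff] at heq
        rcases heq with ⟨hzy, -⟩ | ⟨-, hxy'⟩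
        · exact h2.ne' hzy
        · exact hxy hxy'
  · intro w hw
    simp [Walk.support_concat, List.concat_eq_append, hw]



namespace HeavyAux2
open Finset


variable {V : Type*} [Fintype V] [DecidableEq V] {G : SimpleGraph V}

lemma exists_walk_of_chain : ∀ (a : V) (l : List V), List.Chain G.Adj a l →
    ∃ (b : V) (w : G.Walk a b), w.support = a :: l := by
  intro a l
  induction l generalizing a with
  | nil => exact fun _ => ⟨a, Walk.nil, by simp⟩
  | cons b l ih =>
    intro h
    replace h := List.isChain_cons_cons.1 h
    obtain ⟨e, w, hw⟩ := ih b h.2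
    exact ⟨e, Walk.cons h.1 w, by simp [hw]⟩

lemma clique_cycle {S : Finset V} (h3 : 3 ≤ S.card)
    (hcl : ∀ x ∈ S, ∀ y ∈ S, x ≠ y → G.Adj x y) :
    ∃ (a : V) (c : G.Walk a a), c.IsCycle ∧ ∀ v ∈ S, v ∈ c.support := by
  classical
  have hlen : 3 ≤ S.toList.length := by rwa [Finset.length_toList]
  obtain ⟨z, b, rest, hl⟩ : ∃ z b rest, S.toList = z :: b :: rest := by
    rcases h : S.toList with _ | ⟨z, _ | ⟨b, rest⟩⟩
    · rw [h] at hlen; simp at hlen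
    · rw [h] at hlen; simp at hlen
    · exact ⟨z, b, rest, rfl⟩
  have hnd : (z :: b :: rest).Nodup := hl ▸ S.nodup_toList
  have hmem : ∀ x, x ∈ z :: b :: rest ↔ x ∈ S := fun x => hl ▸ Finset.mem_toList
  rw [hl] at hlen
  · have hrest : rest ≠ [] := by
      rintro rfl; simp at hlen
    have hchain : List.Chain G.Adj b rest := by
      have hpw : (b :: rest).Pairwise G.Adj := by
        have : (b :: rest).Pairwise (· ≠ ·) := hnd.sublist (by simp)
        refine this.imp_of_mem ?_
        intro x y hx hy hne
        exact hcl x ((hmem x).1 (by simp [hx])) y ((hmem y).1 (by simp [hy])) hne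
      exact hpw.isChain
    obtain ⟨e, w, hw⟩ := exists_walk_of_chain b rest hchain
    have hwp : w.IsPath := Walk.IsPath.mk' (by rw [hw]; exact hnd.of_cons)
    have hes : e ∈ rest := by
      have h1 : e ∈ w.support := w.end_mem_support
      rw [hw] at h1
      rcases List.mem_cons.1 h1 with rfl | h2
      · exfalso
        have hnil := (Walk.isPath_iff_eq_nil (p := w)).1 hwp
        rw [hnil] at hw
        simp at hw
        exact hrest hw
      · exact h2
    have hbz : b ≠ z := by
      intro h; subst h; simp at hnd
    have hez : e ≠ z := by
      intro h; subst h
      exact (List.nodup_cons.1 hnd).1 (by simp [hes])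
    have hbe : b ≠ e := by
      intro h; subst h
      exact (List.nodup_cons.1 (List.nodup_cons.1 hnd).2).1 hes
    have hz : z ∉ w.support := by
      rw [hw]
      intro h
      rcases List.mem_cons.1 h with rfl | h2
      · exact hbz rfl
      · exact (List.nodup_cons.1 hnd).1 (by simp [h2])
    obtain ⟨c, hc, hcs⟩ := HeavyAux.closeCycle w hwp hbe hz
      (hcl z ((hmem z).1 (by simp)) b ((hmem b).1 (by simp)) (Ne.symm hbz))
      (hcl e ((hmem e).1 (by simp [hes])) z ((hmem z).1 (by simp)) hez)
    refine ⟨z, c, hc, ?_⟩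
    intro v hv
    have : v ∈ z :: b :: rest := (hmem v).2 hv
    rcases List.mem_cons.1 this with rfl | h2
    · exact c.start_mem_support
    · exact hcs v (by rw [hw]; exact h2)



lemma exists_split_of_mem_darts {u v : V} :
    ∀ (p : G.Walk u v) {d : G.Dart} (_ : d ∈ p.darts),
    ∃ (q : G.Walk u d.fst) (r : G.Walk d.snd v), p.support = q.support ++ r.support := by
  intro p
  induction p with
  | nil => intro d hd; simp at hd
  | @cons a b c h p ih =>
    intro d hd
    rw [Walk.darts_cons, List.mem_cons] at hd
    rcases hd with rfl | hd
    · exact ⟨Walk.nil, p, by simp⟩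
    · obtain ⟨q, r, hqr⟩ := ih hd
      exact ⟨Walk.cons h q, r, by simp [hqr]⟩

lemma crossCycle {x a b y : V} (q : G.Walk x a) (r : G.Walk b y)
    (hnd : (q.support ++ r.support).Nodup) (hax : a ≠ x)
    (h1 : G.Adj a y) (h2 : G.Adj b x) :
    ∃ c : G.Walk x x, c.IsCycle ∧
      ∀ w, (w ∈ q.support ∨ w ∈ r.support) → w ∈ c.support := by
  have hqnd : q.support.Nodup := (List.nodup_append.1 hnd).1
  have hrnd : r.support.Nodup := (List.nodup_append.1 hnd).2.1
  have hdisj : ∀ w, w ∈ q.support → w ∈ r.support → False := by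
    intro w hw1 hw2
    exact (List.nodup_append.1 hnd).2.2 w hw1 w hw2 rfl
  have hxq : x ∈ q.support := q.start_mem_support
  have haq : a ∈ q.support := q.end_mem_support
  have hbr : b ∈ r.support := r.start_mem_support
  have hyr : y ∈ r.support := r.end_mem_support
  have hxy : x ≠ y := fun h => hdisj x hxq (h ▸ hyr)
  have hay : a ≠ y := h1.ne
  have hbx : b ≠ x := h2.ne
  have hab : a ≠ b := fun h => hdisj a haq (h ▸ hbr)
  -- the cycle
  refine ⟨q.append (Walk.cons h1 (r.reverse.concat h2)), ?_, ?_⟩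
  · have hsup : (q.append (Walk.cons h1 (r.reverse.concat h2))).support
        = q.support ++ (r.support.reverse ++ [x]) := by
      rw [Walk.support_append]
      simp [Walk.support_concat, Walk.support_reverse, List.concat_eq_append]
    have hedges : (q.append (Walk.cons h1 (r.reverse.concat h2))).edges
        = q.edges ++ (s(a, y) :: (r.reverse.edges ++ [s(b, x)])) := by
      rw [Walk.edges_append, Walk.edges_cons, Walk.edges_concat]
      simp [List.concat_eq_append]
    have hqe : q.edges.Nodup := Walk.edges_nodup_of_support_nodup hqnd
    have hre : r.reverse.edges.Nodup := by
      rw [Walk.edges_reverse]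
      exact List.nodup_reverse.mpr (Walk.edges_nodup_of_support_nodup hrnd)
    have hmemr : ∀ e, e ∈ r.reverse.edges ↔ e ∈ r.edges := by
      intro e; rw [Walk.edges_reverse, List.mem_reverse]
    have hq_mem : ∀ c d : V, s(c, d) ∈ q.edges → c ∈ q.support ∧ d ∈ q.support :=
      fun c d he => ⟨q.fst_mem_support_of_mem_edges he, q.snd_mem_support_of_mem_edges he⟩
    have hr_mem : ∀ c d : V, s(c, d) ∈ r.reverse.edges → c ∈ r.support ∧ d ∈ r.support := by
      intro c d he
      rw [hmemr] at he
      exact ⟨r.fst_mem_support_of_mem_edges he, r.snd_mem_support_of_mem_edges he⟩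
    constructor
    constructor
    · -- IsTrail : edges nodup
      constructor
      rw [hedges]
      rw [List.nodup_append]
      refine ⟨hqe, ?_, ?_⟩
      · rw [List.nodup_cons]
        constructor
        · rw [List.mem_append, List.mem_singleton]
          rintro (hmem | heq)
          · exact hdisj a haq (hr_mem a y hmem).1
          · rw [Sym2.eq_iff] at heq
            rcases heq with ⟨h', -⟩ | ⟨h', -⟩
            · exact hab h'
            · exact hax h'
        · rw [List.nodup_append]
          refine ⟨hre, List.nodup_singleton _, ?_⟩
          intro e he e' he' hee; subst hee
          rw [List.mem_singleton] at he'
          subst he'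
          exact hdisj x hxq (hr_mem b x he).2
      · intro e he e' he' hee; subst hee
        rw [List.mem_cons, List.mem_append, List.mem_singleton] at he'
        revert he
        induction e with
        | _ c d =>
          intro he
          rcases he' with heq | hmem | heq
          · rw [heq] at he
            exact hdisj y ((hq_mem a y he).2) hyr
          · exact hdisj c (hq_mem c d he).1 (hr_mem c d hmem).1
          · rw [heq] at he
            exact hdisj b ((hq_mem b x he).1) hbr
    · -- ne_nil
      intro hcontra
      have hs := congrArg Walk.support hcontra
      rw [hsup] at hs
      have hlen := congrArg List.length hs
      simp [Walk.length_support] at hlen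
      omega
    · -- support tail nodup
      have htail : (q.append (Walk.cons h1 (r.reverse.concat h2))).support.tail
          = q.support.tail ++ (r.support.reverse ++ [x]) := by
        rw [hsup]
        conv_lhs => rw [q.support_eq_cons]
        rfl
      rw [htail, List.nodup_append]
      have hxtail : x ∉ q.support.tail := by
        have := hqnd
        rw [q.support_eq_cons, List.nodup_cons] at this
        exact this.1
      refine ⟨?_, ?_, ?_⟩
      · have := hqnd
        rw [q.support_eq_cons, List.nodup_cons] at this
        exact this.2
      · rw [List.nodup_append]
        refine ⟨List.nodup_reverse.mpr hrnd, List.nodup_singleton _, ?_⟩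
        intro e he e' he' hee; subst hee
        rw [List.mem_singleton] at he'
        rw [he'] at he
        rw [List.mem_reverse] at he
        exact hdisj x hxq he
      · intro e he e' he' hee; subst hee
        have heq : e ∈ q.support := List.mem_of_mem_tail he
        rw [List.mem_append, List.mem_reverse, List.mem_singleton] at he'
        rcases he' with h' | rfl
        · exact hdisj e heq h'
        · exact hxtail he
  · intro w hw
    rw [Walk.mem_support_append_iff]
    rcases hw with hw | hw
    · exact Or.inl hw
    · right
      simp [Walk.support_concat, Walk.support_reverse, List.concat_eq_append]
      tauto


lemma core {x y : V} {G : SimpleGraph V} [DecidableRel G.Adj] (p : G.Walk x y) (hp : p.IsPath)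
    (hnadj : ¬ G.Adj x y) (hne : x ≠ y)
    (hdeg : Fintype.card V ≤ G.degree x + G.degree y) {S : Finset V}
    (hS : ∀ v ∈ S, v ∈ p.support) :
    ∃ (a : V) (c : G.Walk a a), c.IsCycle ∧ ∀ v ∈ S, v ∈ c.support := by
  classical
  by_cases hC1 : ∃ z, z ∉ p.support ∧ G.Adj x z ∧ G.Adj y z
  · obtain ⟨z, hz, hzx, hzy⟩ := hC1
    obtain ⟨c, hc, hcs⟩ := closeCycle p hp hne hz hzx.symm hzy
    exact ⟨z, c, hc, fun v hv => hcs v (hS v hv)⟩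
  by_cases hC2 : ∃ d ∈ p.darts, G.Adj y d.fst ∧ G.Adj x d.snd
  · obtain ⟨d, hd, hdy, hdx⟩ := hC2
    obtain ⟨q, r, hqr⟩ := exists_split_of_mem_darts p hd
    have hnd : (q.support ++ r.support).Nodup := hqr ▸ hp.support_nodup
    have hax : d.fst ≠ x := by
      rintro h
      exact hnadj (by rw [h] at hdy; exact hdy.symm)
    obtain ⟨c, hc, hcs⟩ := crossCycle q r hnd hax hdy.symm hdx.symm
    refine ⟨x, c, hc, fun v hv => ?_⟩
    have := hS v hv
    rw [hqr, List.mem_append] at this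
    exact hcs v this
  exfalso
  push_neg at hC1 hC2
  -- darts have nodup fsts and snds
  have hndsup : p.support.Nodup := hp.support_nodup
  have hfst_nodup : (p.darts.map (·.fst)).Nodup := by
    rw [Walk.map_fst_darts]
    exact hndsup.sublist (List.dropLast_sublist _)
  have hsnd_nodup : (p.darts.map (·.snd)).Nodup := by
    rw [Walk.map_snd_darts]
    exact (List.nodup_cons.1 (p.support_eq_cons ▸ hndsup)).2
  have hxtail : x ∉ p.support.tail := (List.nodup_cons.1 (p.support_eq_cons ▸ hndsup)).1
  -- the shift map
  set φ : V → V := fun z =>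
    if h : ∃ d ∈ p.darts, d.fst = z then h.choose.snd else z with hφ
  have hφ_on : ∀ z, (h : ∃ d ∈ p.darts, d.fst = z) → φ z = h.choose.snd := by
    intro z h
    simp only [hφ, dif_pos h]
  have hφ_off : ∀ z, z ∉ p.support → φ z = z := by
    intro z hz
    have : ¬ ∃ d ∈ p.darts, d.fst = z := by
      rintro ⟨d, hd, rfl⟩
      exact hz (p.dart_fst_mem_support_of_mem_darts hd)
    simp only [hφ, dif_neg this]
  have hmem_dart : ∀ z, z ∈ p.support → z ≠ y → ∃ d ∈ p.darts, d.fst = z := by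
    intro z hz hzy
    have h1 : z ∈ p.support.dropLast := by
      have h2 := List.dropLast_append_getLast (p.support_ne_nil)
      have h3 : p.support.getLast p.support_ne_nil = y := p.getLast_support
      rw [← h2, List.mem_append, List.mem_singleton, h3] at hz
      tauto
    rw [← Walk.map_fst_darts, List.mem_map] at h1
    obtain ⟨d, hd, hdz⟩ := h1
    exact ⟨d, hd, hdz⟩
  set A := G.neighborFinset x with hA
  set B := G.neighborFinset y with hB
  have hφB : ∀ z ∈ B, (φ z ∈ p.support.tail ∧ (∃ d ∈ p.darts, d.fst = z)) ∨ (φ z = z ∧ z ∉ p.support) := by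
    intro z hz
    by_cases hzL : z ∈ p.support
    · left
      have hzy : z ≠ y := (G.mem_neighborFinset y z).1 hz |>.ne'
      have h := hmem_dart z hzL hzy
      refine ⟨?_, h⟩
      rw [hφ_on z h]
      have := h.choose_spec.1
      rw [← Walk.map_snd_darts]
      exact List.mem_map_of_mem this
    · right
      exact ⟨hφ_off z hzL, hzL⟩
  have hφ_notinA : ∀ z ∈ B, φ z ∉ A := by
    intro z hz hcon
    have hadjyz : G.Adj y z := (G.mem_neighborFinset y z).1 hz
    rcases hφB z hz with ⟨h1, h⟩ | ⟨h1, h2⟩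
    · have hd := h.choose_spec
      refine hC2 h.choose hd.1 (by rw [hd.2]; exact hadjyz) ?_
      rw [hφ_on z h] at hcon
      exact (G.mem_neighborFinset x _).1 hcon
    · rw [h1] at hcon
      exact hC1 z h2 ((G.mem_neighborFinset x z).1 hcon) hadjyz
  have hφ_nex : ∀ z ∈ B, φ z ≠ x := by
    intro z hz hcon
    rcases hφB z hz with ⟨h1, -⟩ | ⟨h1, h2⟩
    · rw [hcon] at h1; exact hxtail h1
    · rw [h1] at hcon; subst hcon; exact h2 p.start_mem_support
  have hinj : Set.InjOn φ B := by
    intro z1 hz1 z2 hz2 heq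
    rcases hφB z1 (by simpa using hz1) with ⟨m1, h1⟩ | ⟨e1, n1⟩
    · rcases hφB z2 (by simpa using hz2) with ⟨m2, h2⟩ | ⟨e2, n2⟩
      · rw [hφ_on z1 h1, hφ_on z2 h2] at heq
        have hd1 := h1.choose_spec
        have hd2 := h2.choose_spec
        have : h1.choose = h2.choose :=
          List.inj_on_of_nodup_map hsnd_nodup hd1.1 hd2.1 heq
        rw [← hd1.2, ← hd2.2, this]
      · rw [e2] at heq
        exfalso
        apply n2
        rw [← heq]
        exact List.mem_of_mem_tail m1
    · rcases hφB z2 (by simpa using hz2) with ⟨m2, h2⟩ | ⟨e2, n2⟩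
      · rw [e1] at heq
        exfalso
        apply n1
        rw [heq]
        exact List.mem_of_mem_tail m2
      · rw [e1, e2] at heq
        exact heq
  -- counting
  have hcard : A.card + B.card ≤ Fintype.card V - 1 := by
    have himg : (B.image φ).card = B.card := Finset.card_image_of_injOn hinj
    have hsub : A ∪ B.image φ ⊆ Finset.univ.erase x := by
      intro w hw
      rw [Finset.mem_union] at hw
      rcases hw with hw | hw
      · rw [Finset.mem_erase]
        refine ⟨?_, Finset.mem_univ _⟩
        rintro rfl
        exact G.irrefl ((G.mem_neighborFinset _ _).1 hw)
      · rw [Finset.mem_image] at hw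
        obtain ⟨z, hz, rfl⟩ := hw
        exact Finset.mem_erase.2 ⟨hφ_nex z hz, Finset.mem_univ _⟩
    have hdisj : Disjoint A (B.image φ) := by
      rw [Finset.disjoint_right]
      intro w hw
      rw [Finset.mem_image] at hw
      obtain ⟨z, hz, rfl⟩ := hw
      exact hφ_notinA z hz
    have := Finset.card_le_card hsub
    rw [Finset.card_union_of_disjoint hdisj, himg] at this
    rwa [Finset.card_erase_of_mem (Finset.mem_univ x), Finset.card_univ] at this
  have e1 : G.degree x = A.card := rfl
  have e2 : G.degree y = B.card := rfl
  rw [e1, e2] at hdeg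
  have hpos : 1 ≤ Fintype.card V := Fintype.card_pos_iff.2 ⟨x⟩
  omega

lemma drop_last_edge {x y : V} {G : SimpleGraph V} (hxy : x ≠ y) :
    ∀ {w c : V} (t : G.Walk w c), c = x → t.IsPath → s(x, y) ∈ t.edges →
    ∃ r : G.Walk w y, r.IsPath ∧ x ∉ r.support ∧ r.support ⊆ t.support ∧
      (∀ z ∈ t.support, z = x ∨ z ∈ r.support) ∧ r.edges ⊆ t.edges ∧ s(x, y) ∉ r.edges := by
  intro w c t
  induction t with
  | nil => intro _ _ he; simp at he
  | @cons a b c h t ih =>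
    intro hcx hp he
    have hcx' : x = c := hcx.symm
    subst hcx' 
    rw [Walk.edges_cons, List.mem_cons] at he
    have hxa : x ≠ a := by
      rintro rfl
      have hx : x ∈ t.support := t.end_mem_support
      have := hp.support_nodup
      rw [Walk.support_cons, List.nodup_cons] at this
      exact this.1 hx
    rcases he with heq | he
    · rw [Sym2.eq_iff] at heq
      rcases heq with ⟨h1, h2⟩ | ⟨h1, h2⟩
      · exact absurd h1 hxa
      · -- x = b, y = a : the walk is the single edge a—x (t is nil)
        subst h1
        have hnil := (Walk.isPath_iff_eq_nil (p := t)).1 hp.of_cons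
        subst hnil
        refine ⟨Walk.nil.copy rfl h2.symm, ?_, ?_, ?_, ?_, ?_, ?_⟩
        · simp
        · simp [Walk.support_copy]
          exact fun hcon => hxa hcon
        · simp [Walk.support_copy, h2]
        · intro z hz
          simp at hz
          rcases hz with rfl | rfl
          · right; simp [Walk.support_copy, h2]
          · left; rfl
        · simp
        · simp
    · obtain ⟨r, hr, hxr, hrsub, hcov, hsub, hne⟩ := ih rfl hp.of_cons he
      have hwa : a ∉ r.support := by
        intro hcon
        have hnd := hp.support_nodup
        rw [Walk.support_cons, List.nodup_cons] at hnd
        exact hnd.1 (hrsub hcon)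
      refine ⟨Walk.cons h r, ?_, ?_, ?_, ?_, ?_, ?_⟩
      · rw [Walk.cons_isPath_iff]
        exact ⟨hr, hwa⟩
      · rw [Walk.support_cons, List.mem_cons]
        rintro (rfl | hcon)
        · exact hxa rfl
        · exact hxr hcon
      · intro z hz
        rw [Walk.support_cons, List.mem_cons] at hz ⊢
        rcases hz with rfl | hz
        · exact Or.inl rfl
        · exact Or.inr (hrsub hz)
      · intro z hz
        rw [Walk.support_cons, List.mem_cons] at hz
        rcases hz with rfl | hz
        · right; exact Walk.start_mem_support _
        · rcases hcov z hz with h' | h'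
          · exact Or.inl h'
          · right; rw [Walk.support_cons]; exact List.mem_cons_of_mem _ h'
      · intro e heq
        rw [Walk.edges_cons, List.mem_cons] at heq ⊢
        rcases heq with rfl | heq
        · exact Or.inl rfl
        · exact Or.inr (hsub heq)
      · rw [Walk.edges_cons, List.mem_cons]
        rintro (heq | hcon)
        · rw [Sym2.eq_iff] at heq
          rcases heq with ⟨h1, -⟩ | ⟨h1, -⟩
          · exact hxa h1
          · subst h1
            have hnil := (Walk.isPath_iff_eq_nil (p := t)).1 hp.of_cons
            rw [hnil] at he
            simp at he
        · exact hne hcon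

lemma path_of_cycle_edge {a x y : V} {G : SimpleGraph V} (hxy : x ≠ y)
    (c : G.Walk a a) (hc : c.IsCycle) (he : s(x, y) ∈ c.edges) :
    ∃ p : G.Walk x y, p.IsPath ∧ s(x, y) ∉ p.edges ∧ (∀ e ∈ p.edges, e ∈ c.edges) ∧
      ∀ z ∈ c.support, z ∈ p.support := by
  have hx : x ∈ c.support := c.fst_mem_support_of_mem_edges he
  have hc' := hc.rotate hx
  have he' : s(x, y) ∈ (c.rotate x hx).edges := by
    rw [(c.rotate_edges x hx).perm.mem_iff]
    exact he
  have hsup' : ∀ z ∈ c.support, z ∈ (c.rotate x hx).support := by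
    intro z hz
    have hperm := (c.support_rotate x hx).perm
    rw [c.support_eq_cons, List.mem_cons] at hz
    have htl : z ∈ c.support.tail := by
      rcases hz with rfl | hz
      · exact start_mem_tail_support c hc.not_nil
      · exact hz
    exact List.mem_of_mem_tail (hperm.mem_iff.2 htl)
  have hedge' : ∀ e ∈ (c.rotate x hx).edges, e ∈ c.edges := by
    intro e hee
    exact (c.rotate_edges x hx).perm.mem_iff.1 hee
  revert hc' he' hsup' hedge'
  generalize c.rotate x hx = c'
  intro hc' he' hsup' hedge'
  cases c' with
  | nil => simp at he'
  | @cons _ b _ h q =>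
    rw [Walk.cons_isCycle_iff] at hc'
    obtain ⟨hqp, hqe⟩ := hc'
    rw [Walk.edges_cons, List.mem_cons] at he'
    rcases he' with heq | he'
    · -- y = b
      have hyb : y = b := by
        rw [Sym2.eq_iff] at heq
        rcases heq with ⟨-, h2⟩ | ⟨h1, -⟩
        · exact h2
        · exact absurd h1.symm h.ne'
      subst hyb
      refine ⟨q.reverse, hqp.reverse, ?_, ?_, ?_⟩
      · rw [Walk.edges_reverse, List.mem_reverse]
        rwa [← heq] at hqe
      · intro e hee
        rw [Walk.edges_reverse, List.mem_reverse] at hee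
        exact hedge' e (by rw [Walk.edges_cons]; exact List.mem_cons_of_mem _ hee)
      · intro z hz
        have := hsup' z hz
        rw [Walk.support_cons, List.mem_cons] at this
        rw [Walk.support_reverse, List.mem_reverse]
        rcases this with rfl | hz'
        · exact q.end_mem_support
        · exact hz'
    · obtain ⟨r, hr, hxr, hrsub, hcov, hsub, hne⟩ := drop_last_edge hxy q rfl hqp he'
      refine ⟨Walk.cons h r, ?_, ?_, ?_, ?_⟩
      · rw [Walk.cons_isPath_iff]
        exact ⟨hr, hxr⟩
      · rw [Walk.edges_cons, List.mem_cons]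
        rintro (heq | hcon)
        · rw [← heq] at hqe
          exact hqe he'
        · exact hne hcon
      · intro e hee
        rw [Walk.edges_cons, List.mem_cons] at hee
        rcases hee with rfl | hee
        · exact hedge' _ (by rw [Walk.edges_cons]; exact List.mem_cons_self)
        · exact hedge' _ (by rw [Walk.edges_cons]; exact List.mem_cons_of_mem _ (hsub hee))
      · intro z hz
        have := hsup' z hz
        rw [Walk.support_cons, List.mem_cons] at this ⊢
        rcases this with rfl | hz'
        · exact Or.inl rfl
        · rcases hcov z hz' with rfl | hz''
          · exact Or.inl rfl
          · exact Or.inr hz''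

lemma main (k : ℕ) : ∀ (G : SimpleGraph V) [hdec : DecidableRel G.Adj] (S : Finset V),
    (Gᶜ.edgeFinset.card ≤ k) → 3 ≤ S.card →
    (∀ x ∈ S, ∀ y ∈ S, x ≠ y → Fintype.card V ≤ G.degree x + G.degree y) →
    ∃ (a : V) (c : G.Walk a a), c.IsCycle ∧ ∀ v ∈ S, v ∈ c.support := by
  induction k with
  | zero =>
    intro G hdec S hk h3 hOre
    apply clique_cycle h3
    intro x hx y hy hne
    by_contra hnadj
    have hmem : s(x, y) ∈ Gᶜ.edgeFinset := by
      rw [mem_edgeFinset, mem_edgeSet]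
      exact ⟨hne, hnadj⟩
    have := Finset.card_pos.2 ⟨_, hmem⟩
    omega
  | succ k ih =>
    intro G hdec S hk h3 hOre
    by_cases hclq : ∀ x ∈ S, ∀ y ∈ S, x ≠ y → G.Adj x y
    · exact clique_cycle h3 hclq
    push_neg at hclq
    obtain ⟨x, hx, y, hy, hne, hnadj⟩ := hclq
    set G' : SimpleGraph V := G ⊔ SimpleGraph.fromEdgeSet {s(x, y)} with hG'
    letI hdec' : DecidableRel G'.Adj := fun u v =>
      decidable_of_iff (G.Adj u v ∨ (s(u, v) = s(x, y) ∧ u ≠ v))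
        (by rw [hG', sup_adj, fromEdgeSet_adj, Set.mem_singleton_iff])
    have hle : G ≤ G' := le_sup_left
    have hAdj' : G'.Adj x y := by
      rw [hG', sup_adj, fromEdgeSet_adj]
      exact Or.inr ⟨rfl, hne⟩
    have hdegmono : ∀ v, G.degree v ≤ G'.degree v := by
      intro v
      apply Finset.card_le_card
      intro w hw
      rw [mem_neighborFinset] at hw ⊢
      exact hle hw
    have hOre' : ∀ x' ∈ S, ∀ y' ∈ S, x' ≠ y' →
        Fintype.card V ≤ G'.degree x' + G'.degree y' := by
      intro x' hx' y' hy' hne'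
      calc Fintype.card V ≤ G.degree x' + G.degree y' := hOre x' hx' y' hy' hne'
        _ ≤ G'.degree x' + G'.degree y' := Nat.add_le_add (hdegmono x') (hdegmono y')
    have hmeas : G'ᶜ.edgeFinset.card ≤ k := by
      have hxyc : s(x, y) ∈ Gᶜ.edgeFinset := by
        rw [mem_edgeFinset, mem_edgeSet]
        exact ⟨hne, hnadj⟩
      have hsub : G'ᶜ.edgeFinset ⊆ Gᶜ.edgeFinset.erase s(x, y) := by
        intro e hee
        rw [mem_edgeFinset] at hee
        induction e with
        | _ u v =>
          rw [mem_edgeSet, compl_adj] at hee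
          obtain ⟨huv, hnadj'⟩ := hee
          rw [Finset.mem_erase]
          constructor
          · rintro heq
            apply hnadj'
            rw [← mem_edgeSet, heq, mem_edgeSet]
            exact hAdj'
          · rw [mem_edgeFinset, mem_edgeSet, compl_adj]
            refine ⟨huv, fun hcon => hnadj' (hle hcon)⟩
      have := Finset.card_le_card hsub
      rw [Finset.card_erase_of_mem hxyc] at this
      omega
    obtain ⟨a, c', hc', hcs'⟩ := @ih G' hdec' S hmeas h3 hOre'
    by_cases huse : s(x, y) ∈ c'.edges
    · -- extract a path and use the crossing argument
      obtain ⟨p', hp', hpne, hpsub, hpsup⟩ := path_of_cycle_edge hne c' hc' huse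
      have hpG : ∀ e ∈ p'.edges, e ∈ G.edgeSet := by
        intro e hee
        have h1 : e ∈ G'.edgeSet := p'.edges_subset_edgeSet hee
        rw [hG', edgeSet_sup, Set.mem_union, edgeSet_fromEdgeSet] at h1
        rcases h1 with h1 | h1
        · exact h1
        · exfalso
          rw [Set.mem_diff, Set.mem_singleton_iff] at h1
          exact hpne (h1.1 ▸ hee)
      refine core (p'.transfer G hpG) (hp'.transfer hpG) hnadj hne
        (hOre x hx y hy hne) ?_
      intro v hv
      rw [Walk.support_transfer]
      exact hpsup v (hcs' v hv)
    · -- the cycle avoids the new edge; transfer it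
      have hcG : ∀ e ∈ c'.edges, e ∈ G.edgeSet := by
        intro e hee
        have h1 : e ∈ G'.edgeSet := c'.edges_subset_edgeSet hee
        rw [hG', edgeSet_sup, Set.mem_union, edgeSet_fromEdgeSet] at h1
        rcases h1 with h1 | h1
        · exact h1
        · exfalso
          rw [Set.mem_diff, Set.mem_singleton_iff] at h1
          exact huse (h1.1 ▸ hee)
      refine ⟨a, c'.transfer G hcG, hc'.transfer hcG, ?_⟩
      intro v hv
      rw [Walk.support_transfer]
      exact hcs' v hv

end HeavyAux2

end HeavyAux

set_option maxHeartbeats 1000000 in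
theorem stmt_2 {V : Type*} [Fintype V] [DecidableEq V] (G : SimpleGraph V)
    [DecidableRel G.Adj] (hconn : G.Connected)
    (hnoheavy : ¬ ∃ (a : V) (c : G.Walk a a), c.IsCycle ∧
      ∀ v : V, Fintype.card V ≤ 2 * G.degree v → v ∈ c.support) :
    (Finset.univ.filter (fun v : V => Fintype.card V ≤ 2 * G.degree v)).card ≤ 2 := by
  by_contra hcon
  push_neg at hcon
  set S := Finset.univ.filter (fun v : V => Fintype.card V ≤ 2 * G.degree v) with hS
  have h3 : 3 ≤ S.card := hcon
  have hOre : ∀ x ∈ S, ∀ y ∈ S, x ≠ y → Fintype.card V ≤ G.degree x + G.degree y := by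
    intro x hx y hy _
    rw [hS, Finset.mem_filter] at hx hy
    omega
  obtain ⟨a, c, hc, hcs⟩ := HeavyAux.HeavyAux2.main Gᶜ.edgeFinset.card G S le_rfl h3 hOre
  exact hnoheavy ⟨a, c, hc, fun v hv => hcs v (by rw [hS, Finset.mem_filter]; exact ⟨Finset.mem_univ _, hv⟩)⟩
end

section
/- Let G be a connected graph on n vertices containing no heavy cycle, and suppose G has exactly one heavy vertex x. Then G - x has at least n/2 connected components, and each component of G - x contains exactly one neighbor of x. -/
open SimpleGraph

private lemma find_nbr {V : Type*} (G : SimpleGraph V) (x : V) :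
    ∀ {a b : V} (w : G.Walk a b) (hbx : x = b) (ha : a ≠ x),
      ∃ v : {u | u ≠ x}, G.Adj x ↑v ∧
        (G.induce {u | u ≠ x}).Reachable ⟨a, ha⟩ v := by
  intro a b w
  induction w with
  | nil => intro hbx ha; exact absurd hbx.symm ha
  | @cons a c b hab w ih =>
    intro hbx ha
    subst hbx
    by_cases hc : c = x
    · subst hc
      exact ⟨⟨a, ha⟩, hab.symm, Reachable.refl _⟩
    · obtain ⟨v, hv, hr⟩ := ih rfl hc
      refine ⟨v, hv, Reachable.trans ?_ hr⟩
      exact Adj.reachable (by exact hab : (G.induce {u | u ≠ x}).Adj ⟨a, ha⟩ ⟨c, hc⟩)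

theorem stmt_4 {V : Type*} [Fintype V] [DecidableEq V] (G : SimpleGraph V)
    [DecidableRel G.Adj] (hconn : G.Connected) (x : V)
    (hx : ∀ v : V, (Fintype.card V ≤ 2 * G.degree v) ↔ v = x)
    (hnoheavy : ¬ ∃ (a : V) (c : G.Walk a a), c.IsCycle ∧
      ∀ v : V, Fintype.card V ≤ 2 * G.degree v → v ∈ c.support) :
    Fintype.card V ≤ 2 * Nat.card ((G.induce {u | u ≠ x}).ConnectedComponent) ∧
    ∀ c : (G.induce {u | u ≠ x}).ConnectedComponent,
      ∃! u : {u | u ≠ x}, (G.induce {u | u ≠ x}).connectedComponentMk u = c ∧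
        G.Adj x ↑u := by
  set S : Set V := {u | u ≠ x} with hS
  -- uniqueness: no two distinct neighbors of x in the same component
  have key : ∀ (u v : S), G.Adj x ↑u → G.Adj x ↑v → u ≠ v →
      (G.induce S).connectedComponentMk u = (G.induce S).connectedComponentMk v → False := by
    intro u v hxu hxv huv hcomp
    rw [ConnectedComponent.eq] at hcomp
    obtain ⟨p0⟩ := hcomp
    -- get a path in the induced graph, then map it into G
    have hinj : Function.Injective (Embedding.induce S (G := G)).toHom := Subtype.val_injective
    obtain ⟨P, hPpath, hxP⟩ : ∃ P : G.Walk ↑u ↑v, P.IsPath ∧ x ∉ P.support := by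
      refine ⟨(p0.toPath : (G.induce S).Walk u v).map (Embedding.induce S).toHom,
        Walk.map_isPath_of_injective hinj p0.toPath.2, ?_⟩
      erw [Walk.support_map]
      rintro hmem
      obtain ⟨w, _, hww⟩ := List.mem_map.mp hmem
      exact w.2 hww
    -- build the cycle x → u → ... → v → x
    have hQpath : (P.concat hxv.symm).IsPath := by
      rw [← Walk.isPath_reverse_iff, Walk.reverse_concat, Walk.cons_isPath_iff]
      refine ⟨hPpath.reverse, ?_⟩
      rw [Walk.support_reverse]
      simpa using hxP
    have hQedge : s(x, (u : V)) ∉ (P.concat hxv.symm).edges := by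
      rw [Walk.edges_concat, List.concat_eq_append, List.mem_append]
      rintro (h1 | h1)
      · exact hxP (Walk.fst_mem_support_of_mem_edges P h1)
      · have := List.mem_singleton.mp h1
        rw [Sym2.eq_iff] at this
        rcases this with ⟨h1a, _⟩ | ⟨_, h2⟩
        · exact v.2 h1a.symm
        · exact huv (Subtype.ext h2)
    have hcyc : (Walk.cons hxu (P.concat hxv.symm)).IsCycle :=
      (Walk.cons_isCycle_iff _ hxu).mpr ⟨hQpath, hQedge⟩
    exact hnoheavy ⟨x, Walk.cons hxu (P.concat hxv.symm), hcyc, fun w hw => by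
      rw [hx w] at hw; subst hw; exact Walk.start_mem_support _⟩
  -- existence: every component contains a neighbor of x
  have exis : ∀ c : (G.induce S).ConnectedComponent,
      ∃ u : S, (G.induce S).connectedComponentMk u = c ∧ G.Adj x ↑u := by
    intro c
    obtain ⟨a, rfl⟩ := c.exists_rep
    obtain ⟨w⟩ := (hconn ↑a x)
    obtain ⟨v, hv, hr⟩ := find_nbr G x w rfl a.2
    refine ⟨v, ?_, hv⟩
    exact (ConnectedComponent.sound hr.symm)
  constructor
  · -- cardinality
    have hdeg : Fintype.card V ≤ 2 * G.degree x := (hx x).mpr rfl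
    have : G.degree x ≤ Nat.card ((G.induce S).ConnectedComponent) := by
      rw [← G.card_neighborSet_eq_degree x, ← Nat.card_eq_fintype_card]
      have hf : ∀ a : G.neighborSet x, (a : V) ≠ x := by
        intro a
        have ha : G.Adj x ↑a := (G.mem_neighborSet x ↑a).mp a.2
        exact fun h => G.irrefl (h ▸ ha)
      apply Nat.card_le_card_of_injective
        (fun v : G.neighborSet x => (G.induce S).connectedComponentMk ⟨↑v, hf v⟩)
      intro a b hab
      by_contra hne
      refine key ⟨↑a, hf a⟩ ⟨↑b, hf b⟩ ((G.mem_neighborSet x ↑a).mp a.2)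
        ((G.mem_neighborSet x ↑b).mp b.2) ?_ hab
      exact fun h => hne (Subtype.ext (by simpa using congrArg Subtype.val h))
    omega
  · intro c
    obtain ⟨u, hu, hadj⟩ := exis c
    refine ⟨u, ⟨hu, hadj⟩, ?_⟩
    rintro v ⟨hvc, hvadj⟩
    by_contra hne
    exact key v u hvadj hadj hne (hvc.trans hu.symm)
end

section
/- Let G be a connected graph on n vertices containing no heavy cycle, with exactly two heavy vertices x and y. Then xy is a cut edge of G, n is even, the two components of G - xy each have exactly n/2 vertices, and x is adjacent to every other vertex of its component and y is adjacent to every other vertex of its component. -/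
open SimpleGraph

private lemma four_cycle_aux {V : Type*} (G : SimpleGraph V) {x z y w : V} (hxz : G.Adj x z)
    (hzy : G.Adj z y) (hyw : G.Adj y w) (hwx : G.Adj w x) (hxy : x ≠ y) (hzw : z ≠ w) :
    ((Walk.cons hxz (Walk.cons hzy (Walk.cons hyw (Walk.cons hwx Walk.nil)))) : G.Walk x x).IsCycle := by
  have h1 := hxz.ne; have h2 := hzy.ne; have h3 := hyw.ne; have h4 := hwx.ne
  simp [Walk.isCycle_def, Walk.isTrail_def, Sym2.eq, Sym2.rel_iff', List.nodup_cons]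
  aesop

private lemma reach_aux {V : Type*} [Fintype V] [DecidableEq V] (G : SimpleGraph V)
    [DecidableRel G.Adj] (x y : V)
    (hreach : ¬ (G.deleteEdges {s(x, y)}).Reachable x y)
    (hcov : ∀ v : V, v ≠ x → v ≠ y → G.Adj x v ∨ G.Adj y v) :
    ∀ v : V, (G.deleteEdges {s(x, y)}).Reachable x v → v = x ∨ (G.Adj x v ∧ v ≠ y) := by
  intro v hr
  by_cases hvx : v = x
  · exact Or.inl hvx
  have hvy : v ≠ y := by rintro rfl; exact hreach hr
  right
  refine ⟨?_, hvy⟩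
  rcases hcov v hvx hvy with h | h
  · exact h
  · exfalso
    have hadj' : (G.deleteEdges {s(x, y)}).Adj v y := by
      simp only [deleteEdges_adj, Set.mem_singleton_iff]
      refine ⟨h.symm, ?_⟩
      intro hh
      rw [Sym2.eq_iff] at hh
      rcases hh with ⟨h1, h2⟩ | ⟨h1, h2⟩
      · exact hvx h1
      · exact hvy h1
    exact hreach (hr.trans hadj'.reachable)

theorem stmt_5 {V : Type*} [Fintype V] [DecidableEq V] (G : SimpleGraph V)
    [DecidableRel G.Adj] (hconn : G.Connected) (x y : V) (hxy : x ≠ y)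
    (hheavy : ∀ v : V, (Fintype.card V ≤ 2 * G.degree v) ↔ (v = x ∨ v = y))
    (hnoheavy : ¬ ∃ (a : V) (c : G.Walk a a), c.IsCycle ∧
      ∀ v : V, Fintype.card V ≤ 2 * G.degree v → v ∈ c.support) :
    G.Adj x y ∧
    ¬ (G.deleteEdges {s(x, y)}).Connected ∧
    Even (Fintype.card V) ∧
    2 * ((G.deleteEdges {s(x, y)}).connectedComponentMk x).supp.ncard = Fintype.card V ∧
    2 * ((G.deleteEdges {s(x, y)}).connectedComponentMk y).supp.ncard = Fintype.card V ∧
    (∀ u : V, u ≠ x → (G.deleteEdges {s(x, y)}).Reachable x u → G.Adj x u) ∧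
    (∀ u : V, u ≠ y → (G.deleteEdges {s(x, y)}).Reachable y u → G.Adj y u) := by
  classical
  set n := Fintype.card V with hn
  have hdx : n ≤ 2 * G.degree x := (hheavy x).mpr (Or.inl rfl)
  have hdy : n ≤ 2 * G.degree y := (hheavy y).mpr (Or.inr rfl)
  have hn2 : 2 ≤ n := by
    have : ({x, y} : Finset V).card ≤ n := Finset.card_le_univ _
    rwa [Finset.card_insert_of_notMem (by simpa using hxy), Finset.card_singleton] at this
  -- no cycle can contain both x and y as edge endpoints
  have hkey : G.Adj x y → ¬ (G.deleteEdges {s(x, y)}).Reachable x y := by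
    intro hadj hr
    obtain ⟨u, p, hc, he⟩ := adj_and_reachable_delete_edges_iff_exists_cycle.mp ⟨hadj, hr⟩
    refine hnoheavy ⟨u, p, hc, ?_⟩
    intro v hv
    rcases (hheavy v).mp hv with rfl | rfl
    · exact p.fst_mem_support_of_mem_edges he
    · exact p.snd_mem_support_of_mem_edges he
  -- x and y are adjacent
  have hadj : G.Adj x y := by
    by_contra hne
    have hsub : G.neighborFinset x ∪ G.neighborFinset y ⊆ Finset.univ \ {x, y} := by
      intro v hv
      simp only [Finset.mem_union, mem_neighborFinset] at hv
      simp only [Finset.mem_sdiff, Finset.mem_univ, Finset.mem_insert, Finset.mem_singleton,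
        true_and]
      push_neg
      rcases hv with h | h
      · exact ⟨h.ne', fun hvy => hne (hvy ▸ h)⟩
      · exact ⟨fun hvx => hne (hvx ▸ h.symm), h.ne'⟩
    have hcard2 : (Finset.univ \ ({x, y} : Finset V)).card = n - 2 := by
      rw [Finset.card_sdiff_of_subset (Finset.subset_univ _),
        Finset.card_insert_of_notMem (by simpa using hxy), Finset.card_singleton,
      Finset.card_univ]
    have hle : (G.neighborFinset x ∪ G.neighborFinset y).card ≤ n - 2 := by
      rw [← hcard2]; exact Finset.card_le_card hsub
    have hsum : (G.neighborFinset x ∪ G.neighborFinset y).card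
        + (G.neighborFinset x ∩ G.neighborFinset y).card = G.degree x + G.degree y := by
      rw [Finset.card_union_add_card_inter, card_neighborFinset_eq_degree,
        card_neighborFinset_eq_degree]
    have hint : 2 ≤ (G.neighborFinset x ∩ G.neighborFinset y).card := by omega
    obtain ⟨z, hz, w, hw, hzw⟩ := Finset.one_lt_card.mp hint
    simp only [Finset.mem_inter, mem_neighborFinset] at hz hw
    exact hnoheavy ⟨x, _, four_cycle_aux G hz.1 hz.2.symm hw.2 hw.1.symm hxy hzw,
      fun v hv => by
        rcases (hheavy v).mp hv with rfl | rfl <;> simp [Walk.support_cons]⟩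
  have hreach : ¬ (G.deleteEdges {s(x, y)}).Reachable x y := hkey hadj
  have hreach' : ¬ (G.deleteEdges {s(y, x)}).Reachable y x := by
    rw [Sym2.eq_swap]; exact fun h => hreach h.symm
  -- the two neighborhoods minus each other
  set A := (G.neighborFinset x).erase y with hA
  set B := (G.neighborFinset y).erase x with hB
  have hAcard : A.card + 1 = G.degree x := by
    rw [hA, Finset.card_erase_of_mem (by simpa [mem_neighborFinset] using hadj),
      card_neighborFinset_eq_degree]
    have : 1 ≤ G.degree x := by omega
    omega
  have hBcard : B.card + 1 = G.degree y := by
    rw [hB, Finset.card_erase_of_mem (by simpa [mem_neighborFinset] using hadj.symm),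
      card_neighborFinset_eq_degree]
    have : 1 ≤ G.degree y := by omega
    omega
  have hdisj : Disjoint A B := by
    rw [Finset.disjoint_left]
    intro z hzA hzB
    rw [hA, Finset.mem_erase, mem_neighborFinset] at hzA
    rw [hB, Finset.mem_erase, mem_neighborFinset] at hzB
    have h1 : (G.deleteEdges {s(x, y)}).Adj x z := by
      simp only [deleteEdges_adj, Set.mem_singleton_iff]
      refine ⟨hzA.2, ?_⟩
      intro hh
      rw [Sym2.eq_iff] at hh
      rcases hh with ⟨h1, h2⟩ | ⟨h1, h2⟩
      · exact hzA.1 h2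
      · exact hxy h1
    have h2 : (G.deleteEdges {s(x, y)}).Adj z y := by
      simp only [deleteEdges_adj, Set.mem_singleton_iff]
      refine ⟨hzB.2.symm, ?_⟩
      intro hh
      rw [Sym2.eq_iff] at hh
      rcases hh with ⟨h1, h2⟩ | ⟨h1, h2⟩
      · exact hzB.1 h1
      · exact hxy h2.symm
    exact hreach (h1.reachable.trans h2.reachable)
  have hsub : A ∪ B ⊆ Finset.univ \ {x, y} := by
    intro v hv
    simp only [Finset.mem_union, hA, hB, Finset.mem_erase, mem_neighborFinset] at hv
    simp only [Finset.mem_sdiff, Finset.mem_univ, Finset.mem_insert, Finset.mem_singleton,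
      true_and]
    push_neg
    rcases hv with ⟨h1, h2⟩ | ⟨h1, h2⟩
    · exact ⟨h2.ne', h1⟩
    · exact ⟨h1, h2.ne'⟩
  have hcard2 : (Finset.univ \ ({x, y} : Finset V)).card = n - 2 := by
    rw [Finset.card_sdiff_of_subset (Finset.subset_univ _),
      Finset.card_insert_of_notMem (by simpa using hxy), Finset.card_singleton,
      Finset.card_univ]
  have hle : A.card + B.card ≤ n - 2 := by
    rw [← Finset.card_union_of_disjoint hdisj, ← hcard2]
    exact Finset.card_le_card hsub
  have hAeq : 2 * A.card = n - 2 := by omega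
  have hBeq : 2 * B.card = n - 2 := by omega
  have heven : Even n := ⟨A.card + 1, by omega⟩
  have hABfull : A ∪ B = Finset.univ \ {x, y} := by
    apply Finset.eq_of_subset_of_card_le hsub
    rw [hcard2, Finset.card_union_of_disjoint hdisj]
    omega
  have hcov : ∀ v : V, v ≠ x → v ≠ y → G.Adj x v ∨ G.Adj y v := by
    intro v hvx hvy
    have hv : v ∈ A ∪ B := by
      rw [hABfull]
      simp [hvx, hvy]
    simp only [Finset.mem_union, hA, hB, Finset.mem_erase, mem_neighborFinset] at hv
    tauto
  have hcov' : ∀ v : V, v ≠ y → v ≠ x → G.Adj y v ∨ G.Adj x v := fun v h1 h2 =>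
    (hcov v h2 h1).symm
  have key1 := reach_aux G x y hreach hcov
  have key2' := reach_aux G y x hreach' hcov'
  have key2 : ∀ v : V, (G.deleteEdges {s(x, y)}).Reachable y v →
      v = y ∨ (G.Adj y v ∧ v ≠ x) := by
    intro v hv
    apply key2'
    rwa [Sym2.eq_swap]
  -- adjacency of x with members of A in the deleted graph
  have hadjA : ∀ a ∈ A, (G.deleteEdges {s(x, y)}).Adj x a := by
    intro a ha
    rw [hA, Finset.mem_erase, mem_neighborFinset] at ha
    simp only [deleteEdges_adj, Set.mem_singleton_iff]
    refine ⟨ha.2, ?_⟩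
    intro hh
    rw [Sym2.eq_iff] at hh
    rcases hh with ⟨h1, h2⟩ | ⟨h1, h2⟩
    · exact ha.1 h2
    · exact hxy h1
  have hadjB : ∀ b ∈ B, (G.deleteEdges {s(x, y)}).Adj y b := by
    intro b hb
    rw [hB, Finset.mem_erase, mem_neighborFinset] at hb
    simp only [deleteEdges_adj, Set.mem_singleton_iff]
    refine ⟨hb.2, ?_⟩
    intro hh
    rw [Sym2.eq_iff] at hh
    rcases hh with ⟨h1, h2⟩ | ⟨h1, h2⟩
    · exact hxy h1.symm
    · exact hb.1 h2
  -- supports of the components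
  have hsuppx : ((G.deleteEdges {s(x, y)}).connectedComponentMk x).supp
      = ↑(insert x A) := by
    ext v
    simp only [ConnectedComponent.mem_supp_iff, ConnectedComponent.eq, Finset.coe_insert,
      Set.mem_insert_iff, Finset.mem_coe]
    constructor
    · intro hr
      rcases key1 v hr.symm with h | ⟨h1, h2⟩
      · exact Or.inl h
      · exact Or.inr (by rw [hA, Finset.mem_erase, mem_neighborFinset]; exact ⟨h2, h1⟩)
    · rintro (rfl | hv)
      · exact Reachable.refl _
      · exact (hadjA v hv).symm.reachable
  have hsuppy : ((G.deleteEdges {s(x, y)}).connectedComponentMk y).supp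
      = ↑(insert y B) := by
    ext v
    simp only [ConnectedComponent.mem_supp_iff, ConnectedComponent.eq, Finset.coe_insert,
      Set.mem_insert_iff, Finset.mem_coe]
    constructor
    · intro hr
      rcases key2 v hr.symm with h | ⟨h1, h2⟩
      · exact Or.inl h
      · exact Or.inr (by rw [hB, Finset.mem_erase, mem_neighborFinset]; exact ⟨h2, h1⟩)
    · rintro (rfl | hv)
      · exact Reachable.refl _
      · exact (hadjB v hv).symm.reachable
  have hxA : x ∉ A := by
    rw [hA, Finset.mem_erase, mem_neighborFinset]
    rintro ⟨-, h⟩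
    exact G.loopless.irrefl x h
  have hyB : y ∉ B := by
    rw [hB, Finset.mem_erase, mem_neighborFinset]
    rintro ⟨-, h⟩
    exact G.loopless.irrefl y h
  refine ⟨hadj, ?_, heven, ?_, ?_, ?_, ?_⟩
  · intro h
    exact hreach (h.preconnected x y)
  · rw [hsuppx, Set.ncard_coe_finset, Finset.card_insert_of_notMem hxA]
    omega
  · rw [hsuppy, Set.ncard_coe_finset, Finset.card_insert_of_notMem hyB]
    omega
  · intro u hu hr
    rcases key1 u hr with h | ⟨h, -⟩
    · exact absurd h hu
    · exact h
  · intro u hu hr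
    rcases key2 u hr with h | ⟨h, -⟩
    · exact absurd h hu
    · exact h
end

section
/- Let G be a graph on n vertices, let C be a longest cycle of G, and let P be a path (or an o-path) of G with endpoints x and y such that |V(P)| > |V(C)|. Then xy is not an edge of G and d(x) + d(y) < n. -/
open SimpleGraph Finset

set_option linter.unusedSectionVars false

section Helpers

variable {V : Type*} [Fintype V] [DecidableEq V] (G : SimpleGraph V) [DecidableRel G.Adj]


private lemma buildPath (w : ℕ → V) : ∀ (m : ℕ), (∀ i, i < m → G.Adj (w i) (w (i+1))) →
    ∃ p : G.Walk (w 0) (w m), p.support = (List.range (m+1)).map w ∧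
      p.length = m ∧ ∀ e ∈ p.edges, ∃ i, i < m ∧ e = s(w i, w (i+1)) := by
  intro m
  induction m with
  | zero => intro _; exact ⟨SimpleGraph.Walk.nil, by rw [List.range_succ]; simp, by simp, by simp⟩
  | succ m ih =>
    intro h
    obtain ⟨p, hs, hl, he⟩ := ih (fun i hi => h i (by omega))
    refine ⟨p.concat (h m (by omega)), ?_, ?_, ?_⟩
    · rw [SimpleGraph.Walk.support_concat, hs]
      simp [List.range_succ]
    · rw [SimpleGraph.Walk.length_concat, hl]
    · intro e hemem
      rw [SimpleGraph.Walk.edges_concat, List.concat_eq_append, List.mem_append] at hemem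
      rcases hemem with h1 | h1
      · obtain ⟨i, hi, rfl⟩ := he e h1
        exact ⟨i, by omega, rfl⟩
      · exact ⟨m, by omega, by simpa using h1⟩

private lemma cycleOfChain (w : ℕ → V) (k : ℕ) (hk : 3 ≤ k)
    (hinj : ∀ i j, i < k → j < k → w i = w j → i = j)
    (hadj : ∀ i, i < k → G.Adj (w i) (w ((i+1) % k))) :
    ∃ (b : V) (c : G.Walk b b), c.IsCycle ∧ c.length = k := by
  have hadj' : ∀ i, i < k - 1 → G.Adj (w i) (w (i+1)) := by
    intro i hi
    have := hadj i (by omega)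
    rwa [Nat.mod_eq_of_lt (by omega)] at this
  obtain ⟨p, hs, hl, he⟩ := buildPath G w (k-1) hadj'
  have hclose : G.Adj (w (k-1)) (w 0) := by
    have := hadj (k-1) (by omega)
    have h2 : (k - 1 + 1) % k = 0 := by
      have : k - 1 + 1 = k := by omega
      rw [this, Nat.mod_self]
    rwa [h2] at this
  refine ⟨w (k-1), SimpleGraph.Walk.cons hclose p, ?_, ?_⟩
  · rw [SimpleGraph.Walk.cons_isCycle_iff]
    constructor
    · rw [SimpleGraph.Walk.isPath_def, hs]
      rw [List.nodup_map_iff_inj_on List.nodup_range]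
      intro i hi j hj hij
      simp only [List.mem_range] at hi hj
      exact hinj i j (by omega) (by omega) hij
    · intro hmem
      obtain ⟨i, hi, hie⟩ := he _ hmem
      rw [Sym2.eq_iff] at hie
      rcases hie with ⟨h1, h2⟩ | ⟨h1, h2⟩
      · have := hinj (k-1) i (by omega) (by omega) h1
        omega
      · have e1 := hinj (k-1) (i+1) (by omega) (by omega) h1
        have e2 := hinj 0 i (by omega) (by omega) h2
        omega
  · rw [SimpleGraph.Walk.length_cons, hl]; omega


private lemma key2 (m : ℕ)
    (ih : ∀ (k : ℕ) (w : ℕ → V), 3 ≤ k →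
      (∀ i j, i < k → j < k → w i = w j → i = j) →
      (∀ i, i < k → G.Adj (w i) (w ((i+1) % k)) ∨
        Fintype.card V ≤ G.degree (w i) + G.degree (w ((i+1) % k))) →
      ((Finset.range k).filter (fun i => ¬ G.Adj (w i) (w ((i+1) % k)))).card ≤ m →
      ∃ (b : V) (c : G.Walk b b), c.IsCycle ∧ k ≤ c.length)
    (k : ℕ) (w : ℕ → V) (hk : 3 ≤ k)
    (hinj : ∀ i j, i < k → j < k → w i = w j → i = j)
    (hoc : ∀ i, i < k → G.Adj (w i) (w ((i+1) % k)) ∨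
      Fintype.card V ≤ G.degree (w i) + G.degree (w ((i+1) % k)))
    (hcard : ((Finset.range k).filter (fun i => ¬ G.Adj (w i) (w ((i+1) % k)))).card ≤ m + 1)
    (hlastv : (k-1) ∈ (Finset.range k).filter (fun i => ¬ G.Adj (w i) (w ((i+1) % k)))) :
    ∃ (b : V) (c : G.Walk b b), c.IsCycle ∧ k ≤ c.length := by
  have hk0 : 0 < k := by omega
  have hmod0 : (k - 1 + 1) % k = 0 := by
    rw [show k - 1 + 1 = k by omega, Nat.mod_self]
  have hyx : ¬ G.Adj (w (k-1)) (w 0) := by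
    have := (Finset.mem_filter.mp hlastv).2
    rwa [hmod0] at this
  have hdeg : Fintype.card V ≤ G.degree (w (k-1)) + G.degree (w 0) := by
    have := hoc (k-1) (by omega)
    rw [hmod0] at this
    tauto
  by_cases hA : ∃ i, i < k - 1 ∧ G.Adj (w 0) (w (i+1)) ∧ G.Adj (w (k-1)) (w i)
  · -- rotation case
    obtain ⟨i, hik, hxi, hyi⟩ := hA
    set w2 : ℕ → V := fun j => if j ≤ i then w j else w (k + i - j) with hw2def
    have hw2a : ∀ j, j ≤ i → w2 j = w j := fun j hj => by simp [hw2def, hj]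
    have hw2b : ∀ j, i < j → w2 j = w (k + i - j) := fun j hj => by
      simp [hw2def, Nat.not_le.mpr hj]
    have winj2 : ∀ a b, a < k → b < k → w2 a = w2 b → a = b := by
      intro a b ha hb hab
      by_cases h1 : a ≤ i <;> by_cases h2 : b ≤ i
      · rw [hw2a a h1, hw2a b h2] at hab; exact hinj a b ha hb hab
      · rw [hw2a a h1, hw2b b (by omega)] at hab
        have := hinj a (k + i - b) ha (by omega) hab; omega
      · rw [hw2b a (by omega), hw2a b h2] at hab
        have := hinj (k + i - a) b (by omega) hb hab; omega
      · rw [hw2b a (by omega), hw2b b (by omega)] at hab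
        have := hinj (k + i - a) (k + i - b) (by omega) (by omega) hab; omega
    -- the two new real edges
    have hl1 : G.Adj (w2 (k-1)) (w2 ((k-1+1) % k)) := by
      rw [hmod0, hw2a 0 (by omega), hw2b (k-1) (by omega),
        show k + i - (k-1) = i + 1 by omega]
      exact hxi.symm
    have hl2 : G.Adj (w2 i) (w2 ((i+1) % k)) := by
      rw [Nat.mod_eq_of_lt (by omega : i + 1 < k), hw2a i le_rfl, hw2b (i+1) (by omega),
        show k + i - (i+1) = k - 1 by omega]
      exact hyi.symm
    have hoc2 : ∀ j, j < k → G.Adj (w2 j) (w2 ((j+1) % k)) ∨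
        Fintype.card V ≤ G.degree (w2 j) + G.degree (w2 ((j+1) % k)) := by
      intro j hj
      by_cases hjk : j = k - 1
      · subst hjk; exact Or.inl hl1
      rcases lt_trichotomy j i with h | h | h
      · rw [Nat.mod_eq_of_lt (by omega : j + 1 < k), hw2a j (by omega), hw2a (j+1) (by omega)]
        have := hoc j (by omega)
        rwa [Nat.mod_eq_of_lt (by omega : j + 1 < k)] at this
      · subst h; exact Or.inl hl2
      · rw [Nat.mod_eq_of_lt (by omega : j + 1 < k), hw2b j h, hw2b (j+1) (by omega)]
        have hs := hoc (k + i - j - 1) (by omega)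
        rw [Nat.mod_eq_of_lt (by omega : k + i - j - 1 + 1 < k),
          show k + i - j - 1 + 1 = k + i - j by omega] at hs
        rw [show k + i - (j+1) = k + i - j - 1 by omega]
        rcases hs with h' | h'
        · exact Or.inl h'.symm
        · exact Or.inr (by omega)
    have hcard2 : ((Finset.range k).filter
        (fun j => ¬ G.Adj (w2 j) (w2 ((j+1) % k)))).card ≤ m := by
      have hle : ((Finset.range k).filter
          (fun j => ¬ G.Adj (w2 j) (w2 ((j+1) % k)))).card ≤
          (((Finset.range k).filter
            (fun j => ¬ G.Adj (w j) (w ((j+1) % k)))).erase (k-1)).card := by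
        apply Finset.card_le_card_of_injOn (fun j => if j < i then j else k + i - j - 1)
        · intro j hj
          simp only [Finset.mem_coe] at hj ⊢
          rw [Finset.mem_filter, Finset.mem_range] at hj
          obtain ⟨hjlt, hjna⟩ := hj
          have hji : j ≠ i := fun h => hjna (h ▸ hl2)
          have hjk : j ≠ k - 1 := fun h => hjna (h ▸ hl1)
          rcases lt_or_gt_of_ne hji with h | h
          · rw [if_pos h]
            rw [Finset.mem_erase, Finset.mem_filter, Finset.mem_range]
            refine ⟨by omega, by omega, ?_⟩
            rw [Nat.mod_eq_of_lt (by omega : j + 1 < k)]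
            rw [Nat.mod_eq_of_lt (by omega : j + 1 < k), hw2a j (by omega),
              hw2a (j+1) (by omega)] at hjna
            exact hjna
          · rw [if_neg (by omega)]
            rw [Finset.mem_erase, Finset.mem_filter, Finset.mem_range]
            refine ⟨by omega, by omega, ?_⟩
            rw [Nat.mod_eq_of_lt (by omega : k + i - j - 1 + 1 < k),
              show k + i - j - 1 + 1 = k + i - j by omega]
            rw [Nat.mod_eq_of_lt (by omega : j + 1 < k), hw2b j h, hw2b (j+1) (by omega),
              show k + i - (j+1) = k + i - j - 1 by omega] at hjna
            intro hadj
            exact hjna hadj.symm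
        · intro a ha b hb hab
          rw [Finset.coe_filter, Set.mem_setOf_eq, Finset.mem_range] at ha hb
          obtain ⟨halt, hana⟩ := ha
          obtain ⟨hblt, hbna⟩ := hb
          have hai : a ≠ i := fun h => hana (h ▸ hl2)
          have hak : a ≠ k - 1 := fun h => hana (h ▸ hl1)
          have hbi : b ≠ i := fun h => hbna (h ▸ hl2)
          have hbk : b ≠ k - 1 := fun h => hbna (h ▸ hl1)
          simp only at hab
          split_ifs at hab <;> omega
      have hcv : (k-1) ∈ (Finset.range k).filter
          (fun j => ¬ G.Adj (w j) (w ((j+1) % k))) := hlastv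
      have := Finset.card_erase_of_mem hcv
      have hpos : 1 ≤ ((Finset.range k).filter
          (fun j => ¬ G.Adj (w j) (w ((j+1) % k)))).card :=
        Finset.card_pos.mpr ⟨k-1, hcv⟩
      omega
    exact ih k w2 hk winj2 hoc2 hcard2
  · by_cases hB : ∃ z, (∀ j, j < k → w j ≠ z) ∧ G.Adj (w 0) z ∧ G.Adj (w (k-1)) z
    · -- extension case
      obtain ⟨z, hz, hxz, hyz⟩ := hB
      set w3 : ℕ → V := fun j => if j = k then z else w j with hw3def
      have hw3a : ∀ j, j < k → w3 j = w j := fun j hj => by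
        simp [hw3def, Nat.ne_of_lt hj]
      have hw3b : w3 k = z := by simp [hw3def]
      have winj3 : ∀ a b, a < k + 1 → b < k + 1 → w3 a = w3 b → a = b := by
        intro a b ha hb hab
        by_cases h1 : a = k <;> by_cases h2 : b = k
        · omega
        · subst h1; rw [hw3b, hw3a b (by omega)] at hab
          exact absurd hab.symm (hz b (by omega))
        · subst h2; rw [hw3b, hw3a a (by omega)] at hab
          exact absurd hab (hz a (by omega))
        · rw [hw3a a (by omega), hw3a b (by omega)] at hab
          exact hinj a b (by omega) (by omega) hab
      have hoc3 : ∀ j, j < k + 1 → G.Adj (w3 j) (w3 ((j+1) % (k+1))) ∨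
          Fintype.card V ≤ G.degree (w3 j) + G.degree (w3 ((j+1) % (k+1))) := by
        intro j hj
        by_cases hj1 : j = k
        · rw [hj1, show (k + 1) % (k + 1) = 0 by simp, hw3b, hw3a 0 (by omega)]
          exact Or.inl hxz.symm
        by_cases hj2 : j = k - 1
        · subst hj2
          rw [Nat.mod_eq_of_lt (by omega : k - 1 + 1 < k + 1),
            show k - 1 + 1 = k by omega, hw3b, hw3a (k-1) (by omega)]
          exact Or.inl hyz
        · rw [Nat.mod_eq_of_lt (by omega : j + 1 < k + 1), hw3a j (by omega),
            hw3a (j+1) (by omega)]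
          have := hoc j (by omega)
          rwa [Nat.mod_eq_of_lt (by omega : j + 1 < k)] at this
      have hcard3 : ((Finset.range (k+1)).filter
          (fun j => ¬ G.Adj (w3 j) (w3 ((j+1) % (k+1))))).card ≤ m := by
        have hle : ((Finset.range (k+1)).filter
            (fun j => ¬ G.Adj (w3 j) (w3 ((j+1) % (k+1))))).card ≤
            (((Finset.range k).filter
              (fun j => ¬ G.Adj (w j) (w ((j+1) % k)))).erase (k-1)).card := by
          apply Finset.card_le_card_of_injOn (fun j => j)
          · intro j hj
            simp only [Finset.mem_coe] at hj ⊢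
            rw [Finset.mem_filter, Finset.mem_range] at hj
            obtain ⟨hjlt, hjna⟩ := hj
            have hj1 : j ≠ k := by
              intro h
              rw [h, show (k + 1) % (k + 1) = 0 by simp, hw3b, hw3a 0 (by omega)] at hjna
              exact hjna hxz.symm
            have hj2 : j ≠ k - 1 := by
              intro h; subst h
              rw [Nat.mod_eq_of_lt (by omega : k - 1 + 1 < k + 1),
                show k - 1 + 1 = k by omega, hw3b, hw3a (k-1) (by omega)] at hjna
              exact hjna hyz
            rw [Finset.mem_erase, Finset.mem_filter, Finset.mem_range]
            refine ⟨hj2, by omega, ?_⟩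
            rw [Nat.mod_eq_of_lt (by omega : j + 1 < k + 1), hw3a j (by omega),
              hw3a (j+1) (by omega)] at hjna
            rwa [Nat.mod_eq_of_lt (by omega : j + 1 < k)]
          · intro a _ b _ hab; exact hab
        have hcv : (k-1) ∈ (Finset.range k).filter
            (fun j => ¬ G.Adj (w j) (w ((j+1) % k))) := hlastv
        have := Finset.card_erase_of_mem hcv
        have hpos : 1 ≤ ((Finset.range k).filter
            (fun j => ¬ G.Adj (w j) (w ((j+1) % k)))).card :=
          Finset.card_pos.mpr ⟨k-1, hcv⟩
        omega
      obtain ⟨b, c, hc, hl⟩ := ih (k+1) w3 (by omega) winj3 hoc3 hcard3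
      exact ⟨b, c, hc, by omega⟩
    · -- counting contradiction
      exfalso
      set x := w 0 with hxdef
      set y := w (k-1) with hydef
      set P : Finset V := (Finset.range k).image w with hPdef
      have hPcard : P.card = k := by
        rw [hPdef, Finset.card_image_of_injOn, Finset.card_range]
        intro a ha b hb hab
        exact hinj a b (Finset.mem_range.mp ha) (Finset.mem_range.mp hb) hab
      have hkn : k ≤ Fintype.card V := hPcard ▸ Finset.card_le_univ P
      set S : Finset ℕ := (Finset.range (k-1)).filter (fun i => G.Adj x (w (i+1))) with hSdef
      set T : Finset ℕ := (Finset.range (k-1)).filter (fun i => G.Adj y (w i)) with hTdef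
      have hdisjST : Disjoint S T := by
        rw [Finset.disjoint_left]
        intro i hiS hiT
        rw [hSdef, Finset.mem_filter, Finset.mem_range] at hiS
        rw [hTdef, Finset.mem_filter, Finset.mem_range] at hiT
        exact hA ⟨i, hiS.1, hiS.2, hiT.2⟩
      have hSP : G.neighborFinset x ∩ P ⊆ S.image (fun i => w (i+1)) := by
        intro v hv
        rw [Finset.mem_inter, SimpleGraph.mem_neighborFinset, hPdef,
          Finset.mem_image] at hv
        obtain ⟨hadj, j, hj, rfl⟩ := hv
        rw [Finset.mem_range] at hj
        have hj0 : j ≠ 0 := by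
          rintro rfl; exact G.irrefl hadj
        rw [Finset.mem_image]
        exact ⟨j - 1, by
          rw [hSdef, Finset.mem_filter, Finset.mem_range]
          exact ⟨by omega, by rw [show j - 1 + 1 = j by omega]; exact hadj⟩,
          by rw [show j - 1 + 1 = j by omega]⟩
      have hTP : G.neighborFinset y ∩ P ⊆ T.image w := by
        intro v hv
        rw [Finset.mem_inter, SimpleGraph.mem_neighborFinset, hPdef,
          Finset.mem_image] at hv
        obtain ⟨hadj, j, hj, rfl⟩ := hv
        rw [Finset.mem_range] at hj
        have hjk : j ≠ k - 1 := by
          rintro rfl; exact G.irrefl hadj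
        rw [Finset.mem_image]
        exact ⟨j, by
          rw [hTdef, Finset.mem_filter, Finset.mem_range]
          exact ⟨by omega, hadj⟩, rfl⟩
      have hdisjout : Disjoint (G.neighborFinset x \ P) (G.neighborFinset y \ P) := by
        rw [Finset.disjoint_left]
        intro z hz1 hz2
        rw [Finset.mem_sdiff, SimpleGraph.mem_neighborFinset] at hz1 hz2
        apply hB
        refine ⟨z, ?_, hz1.1, hz2.1⟩
        intro j hj hje
        apply hz1.2
        rw [hPdef, Finset.mem_image]
        exact ⟨j, Finset.mem_range.mpr hj, hje⟩
      have houtsub : (G.neighborFinset x \ P) ∪ (G.neighborFinset y \ P) ⊆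
          Finset.univ \ P := by
        intro z hz
        rw [Finset.mem_union] at hz
        rw [Finset.mem_sdiff]
        rcases hz with h | h <;>
          exact ⟨Finset.mem_univ _, (Finset.mem_sdiff.mp h).2⟩
      have hout : (G.neighborFinset x \ P).card + (G.neighborFinset y \ P).card ≤
          Fintype.card V - k := by
        rw [← Finset.card_union_of_disjoint hdisjout]
        calc _ ≤ (Finset.univ \ P).card := Finset.card_le_card houtsub
        _ = Fintype.card V - k := by
            rw [Finset.card_sdiff_of_subset (Finset.subset_univ P), Finset.card_univ, hPcard]
      have hST : S.card + T.card ≤ k - 1 := by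
        rw [← Finset.card_union_of_disjoint hdisjST]
        calc _ ≤ (Finset.range (k-1)).card := Finset.card_le_card (by
          intro i hi
          rcases Finset.mem_union.mp hi with h | h
          · exact Finset.mem_of_mem_filter _ (hSdef ▸ h)
          · exact Finset.mem_of_mem_filter _ (hTdef ▸ h))
        _ = k - 1 := Finset.card_range _
      have hdx : G.degree x = (G.neighborFinset x ∩ P).card +
          (G.neighborFinset x \ P).card := by
        rw [← SimpleGraph.card_neighborFinset_eq_degree, Finset.inter_comm,
          ← Finset.card_sdiff_add_card_inter (G.neighborFinset x) P, Finset.inter_comm]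
        omega
      have hdy : G.degree y = (G.neighborFinset y ∩ P).card +
          (G.neighborFinset y \ P).card := by
        rw [← SimpleGraph.card_neighborFinset_eq_degree, Finset.inter_comm,
          ← Finset.card_sdiff_add_card_inter (G.neighborFinset y) P, Finset.inter_comm]
        omega
      have h1 : (G.neighborFinset x ∩ P).card ≤ S.card :=
        le_trans (Finset.card_le_card hSP) (Finset.card_image_le)
      have h2 : (G.neighborFinset y ∩ P).card ≤ T.card :=
        le_trans (Finset.card_le_card hTP) (Finset.card_image_le)
      omega

private lemma key : ∀ (m k : ℕ) (w : ℕ → V), 3 ≤ k →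
    (∀ i j, i < k → j < k → w i = w j → i = j) →
    (∀ i, i < k → G.Adj (w i) (w ((i+1) % k)) ∨
      Fintype.card V ≤ G.degree (w i) + G.degree (w ((i+1) % k))) →
    ((Finset.range k).filter (fun i => ¬ G.Adj (w i) (w ((i+1) % k)))).card ≤ m →
    ∃ (b : V) (c : G.Walk b b), c.IsCycle ∧ k ≤ c.length := by
  intro m
  induction m with
  | zero =>
    intro k w hk hinj hoc hcard
    have hadj : ∀ i, i < k → G.Adj (w i) (w ((i+1) % k)) := by
      intro i hi
      by_contra hna
      have hmem : i ∈ (Finset.range k).filter (fun i => ¬ G.Adj (w i) (w ((i+1) % k))) :=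
        Finset.mem_filter.mpr ⟨Finset.mem_range.mpr hi, hna⟩
      have := Finset.card_pos.mpr ⟨i, hmem⟩
      omega
    obtain ⟨b, c, hc, hl⟩ := cycleOfChain G w k hk hinj hadj
    exact ⟨b, c, hc, hl.ge⟩
  | succ m ih =>
    intro k w hk hinj hoc hcard
    by_cases hsmall :
        ((Finset.range k).filter (fun i => ¬ G.Adj (w i) (w ((i+1) % k)))).card ≤ m
    · exact ih k w hk hinj hoc hsmall
    · have hpos : 0 < ((Finset.range k).filter
          (fun i => ¬ G.Adj (w i) (w ((i+1) % k)))).card := by omega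
      obtain ⟨t, htmem⟩ := Finset.card_pos.mp hpos
      obtain ⟨htlt', htna⟩ := Finset.mem_filter.mp htmem
      have htlt : t < k := Finset.mem_range.mp htlt'
      have hk0 : 0 < k := by omega
      set w1 : ℕ → V := fun j => w ((j + t + 1) % k) with hw1def
      have hσlt : ∀ j : ℕ, (j + t + 1) % k < k := fun j => Nat.mod_lt _ hk0
      have hpair : ∀ j : ℕ, w1 ((j+1) % k) = w (((j + t + 1) % k + 1) % k) := by
        intro j
        show w (((j+1) % k + t + 1) % k) = _
        congr 1
        calc ((j+1) % k + t + 1) % k = ((j+1) % k + (t + 1)) % k := by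
              rw [Nat.add_assoc]
          _ = (j + 1 + (t + 1)) % k := Nat.mod_add_mod _ _ _
          _ = (j + t + 1 + 1) % k := by
              rw [show j + 1 + (t + 1) = j + t + 1 + 1 from by omega]
          _ = ((j + t + 1) % k + 1) % k := (Nat.mod_add_mod _ _ _).symm
      have hidx : ∀ a b : ℕ, a < k → b < k →
          (a + t + 1) % k = (b + t + 1) % k → a = b := by
        intro a b ha hb h1
        have h1' : a + (t + 1) ≡ b + (t + 1) [MOD k] := by
          have : a + (t + 1) = a + t + 1 := by omega
          rw [this, show b + (t + 1) = b + t + 1 from by omega]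
          exact h1
        have h2 : a % k = b % k := Nat.ModEq.add_right_cancel' (t+1) h1'
        rwa [Nat.mod_eq_of_lt ha, Nat.mod_eq_of_lt hb] at h2
      have hinj1 : ∀ a b, a < k → b < k → w1 a = w1 b → a = b := by
        intro a b ha hb hab
        simp only [hw1def] at hab
        exact hidx a b ha hb (hinj _ _ (hσlt a) (hσlt b) hab)
      have hoc1 : ∀ j, j < k → G.Adj (w1 j) (w1 ((j+1) % k)) ∨
          Fintype.card V ≤ G.degree (w1 j) + G.degree (w1 ((j+1) % k)) := by
        intro j hj
        rw [hpair j]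
        simp only [hw1def]
        exact hoc ((j + t + 1) % k) (hσlt j)
      have hcard1 : ((Finset.range k).filter
          (fun j => ¬ G.Adj (w1 j) (w1 ((j+1) % k)))).card ≤ m + 1 := by
        refine le_trans (Finset.card_le_card_of_injOn
          (fun j => (j + t + 1) % k) ?_ ?_) hcard
        · intro j hj
          simp only [Finset.mem_coe] at hj ⊢
          rw [Finset.mem_filter, Finset.mem_range] at hj
          rw [Finset.mem_filter, Finset.mem_range]
          refine ⟨hσlt j, ?_⟩
          have h2 := hj.2
          rw [hpair j] at h2
          simp only [hw1def] at h2
          exact h2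
        · intro a ha b hb hab
          rw [Finset.coe_filter, Set.mem_setOf_eq, Finset.mem_range] at ha hb
          exact hidx a b ha.1 hb.1 hab
      have e1 : (k - 1 + t + 1) % k = t := by
        rw [show k - 1 + t + 1 = k + t from by omega, Nat.add_mod_left,
          Nat.mod_eq_of_lt htlt]
      have hlast1 : (k-1) ∈ (Finset.range k).filter
          (fun j => ¬ G.Adj (w1 j) (w1 ((j+1) % k))) := by
        rw [Finset.mem_filter, Finset.mem_range]
        refine ⟨by omega, ?_⟩
        rw [hpair (k-1)]
        simp only [hw1def]
        rw [e1]
        exact htna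
      exact key2 G m ih k w1 hk hinj1 hoc1 hcard1 hlast1

end Helpers

theorem stmt_9 {V : Type*} [Fintype V] [DecidableEq V] (G : SimpleGraph V)
    [DecidableRel G.Adj] (a : V) (C : G.Walk a a) (hC : C.IsCycle)
    (hlong : ∀ (b : V) (C' : G.Walk b b), C'.IsCycle → C'.length ≤ C.length)
    (k : ℕ) (hk : 2 ≤ k) (w : ℕ → V)
    (hinj : ∀ i j, i < k → j < k → w i = w j → i = j)
    (hop : ∀ i, i + 1 < k → G.Adj (w i) (w (i + 1)) ∨
      Fintype.card V ≤ G.degree (w i) + G.degree (w (i + 1)))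
    (hlen : C.length < k) :
    ¬ G.Adj (w 0) (w (k - 1)) ∧
      G.degree (w 0) + G.degree (w (k - 1)) < Fintype.card V := by
  by_contra hcon
  rw [not_and_or, not_not, not_lt] at hcon
  have hk3 : 3 ≤ C.length := hC.three_le_length
  have hoc : ∀ i, i < k → G.Adj (w i) (w ((i+1) % k)) ∨
      Fintype.card V ≤ G.degree (w i) + G.degree (w ((i+1) % k)) := by
    intro i hi
    by_cases h : i + 1 < k
    · rw [Nat.mod_eq_of_lt h]; exact hop i h
    · have hieq : i = k - 1 := by omega
      subst hieq
      rw [show (k - 1 + 1) % k = 0 from by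
        rw [show k - 1 + 1 = k from by omega]; exact Nat.mod_self k]
      rcases hcon with h' | h'
      · exact Or.inl h'.symm
      · exact Or.inr (by omega)
  obtain ⟨b, c, hc, hl⟩ := key G _ k w (by omega) hinj hoc le_rfl
  have := hlong b c hc
  omega
end

section
/- There exists a finite simple 2-connected graph G with no induced K_{1,5}, such that some longest cycle of G omits a vertex of degree at least |V(G)|/2. -/
open SimpleGraph

section Construction

def adjP (a b : ℕ) : Prop :=
  (a < 18 ∧ b < 18 ∧ ((a+1) % 18 = b ∨ (b+1) % 18 = a)) ∨
  (a = 18 ∧ (b = 0 ∨ 20 ≤ b)) ∨ (b = 18 ∧ (a = 0 ∨ 20 ≤ a)) ∨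
  (a = 19 ∧ (b = 9 ∨ 20 ≤ b)) ∨ (b = 19 ∧ (a = 9 ∨ 20 ≤ a)) ∨
  (20 ≤ a ∧ 20 ≤ b ∧ a ≠ b ∧ (a-20)/6 = (b-20)/6)

instance adjP.dec : ∀ a b, Decidable (adjP a b) := fun a b => by
  unfold adjP; infer_instance

lemma adjP_symm : ∀ a b : Fin 38, adjP a.val b.val → adjP b.val a.val := by decide

def G38 : SimpleGraph (Fin 38) where
  Adj a b := a ≠ b ∧ adjP a.val b.val
  symm := ⟨fun a b h => ⟨h.1.symm, adjP_symm a b h.2⟩⟩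
  loopless := ⟨fun a h => h.1 rfl⟩

instance : DecidableRel G38.Adj := fun a b =>
  inferInstanceAs (Decidable (a ≠ b ∧ adjP a.val b.val))

def comp : Fin 38 → ℕ := fun w =>
  if w.val < 18 then 0 else if w.val = 18 then 1 else if w.val = 19 then 2
  else (w.val - 20)/6 + 3

def posZ : Fin 38 → ZMod 18 := fun w => (w.val : ZMod 18)

lemma fact_comp_adj : ∀ a b : Fin 38, G38.Adj a b → a ≠ 18 → a ≠ 19 → b ≠ 18 → b ≠ 19 →
    comp a = comp b := by decide

lemma fact_NX : ∀ b : Fin 38, G38.Adj 18 b → comp b = 0 → b = 0 := by decide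
lemma fact_NY : ∀ b : Fin 38, G38.Adj 19 b → comp b = 0 → b = 9 := by decide
lemma fact_NX_comp : ∀ b : Fin 38, G38.Adj 18 b →
    comp b = 0 ∨ comp b = 3 ∨ comp b = 4 ∨ comp b = 5 := by decide
lemma fact_NY_comp : ∀ b : Fin 38, G38.Adj 19 b →
    comp b = 0 ∨ comp b = 3 ∨ comp b = 4 ∨ comp b = 5 := by decide
lemma fact_XY : ¬ G38.Adj 18 19 := by decide

lemma fact_card_all : ∀ w : Fin 38,
    (Finset.univ.filter (fun z : Fin 38 => comp z = comp w)).card ≤ 18 := by decide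
lemma fact_card0 : (Finset.univ.filter (fun z : Fin 38 => comp z = 0)).card = 18 := by decide
lemma fact_card3 : (Finset.univ.filter (fun z : Fin 38 => comp z = 3)).card = 6 := by decide
lemma fact_card4 : (Finset.univ.filter (fun z : Fin 38 => comp z = 4)).card = 6 := by decide
lemma fact_card5 : (Finset.univ.filter (fun z : Fin 38 => comp z = 5)).card = 6 := by decide

lemma fact_step : ∀ a b : Fin 38, G38.Adj a b → comp a = 0 → comp b = 0 →
    posZ b = posZ a + 1 ∨ posZ b = posZ a - 1 := by decide
lemma fact_posinj : ∀ a b : Fin 38, comp a = 0 → comp b = 0 → posZ a = posZ b → a = b := by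
  decide

end Construction

section WalkLemmas

open SimpleGraph.Walk

lemma confine : ∀ {a b : Fin 38} (p : G38.Walk a b),
    (∀ z ∈ p.support, z ≠ 18 ∧ z ≠ 19) → ∀ z ∈ p.support, comp z = comp a := by
  intro a b p
  induction p with
  | nil =>
    intro _ z hz
    simp only [Walk.support_nil, List.mem_singleton] at hz
    subst hz; rfl
  | @cons u u' w h q ih =>
    intro hxy z hz
    have hu : u ≠ 18 ∧ u ≠ 19 := hxy u (by simp [Walk.support_cons])
    have hu' : u' ≠ 18 ∧ u' ≠ 19 := by
      refine hxy u' ?_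
      rw [Walk.support_cons]
      exact List.mem_cons_of_mem _ q.start_mem_support
    have hcomp : comp u = comp u' := fact_comp_adj u u' h hu.1 hu.2 hu'.1 hu'.2
    rw [Walk.support_cons] at hz
    rcases List.mem_cons.mp hz with rfl | hz'
    · rfl
    · have := ih (fun z hz => hxy z (by rw [Walk.support_cons]; exact List.mem_cons_of_mem _ hz)) z hz'
      rw [this, hcomp]

lemma len_le {k : ℕ} (l : List (Fin 38)) (hd : l.Nodup) (h : ∀ z ∈ l, comp z = k) :
    l.length ≤ (Finset.univ.filter (fun z : Fin 38 => comp z = k)).card := by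
  classical
  rw [← List.toFinset_card_of_nodup hd]
  apply Finset.card_le_card
  intro z hz
  rw [List.mem_toFinset] at hz
  exact Finset.mem_filter.mpr ⟨Finset.mem_univ _, h z hz⟩

lemma dir : ∀ {a b : Fin 38} (p : G38.Walk a b), p.support.Nodup →
    (∀ z ∈ p.support, comp z = 0) →
    ∃ s : ZMod 18, (s = 1 ∨ s = -1) ∧ posZ b = posZ a + (p.length : ZMod 18) * s ∧
      (p.length ≠ 0 → posZ (p.getVert 1) = posZ a + s) := by
  intro a b p
  induction p with
  | nil => exact fun _ _ => ⟨1, Or.inl rfl, by simp, fun h => absurd rfl h⟩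
  | @cons u u' w h q ih =>
    intro hnd h0
    rw [Walk.support_cons, List.nodup_cons] at hnd
    have h0' : ∀ z ∈ q.support, comp z = 0 := fun z hz =>
      h0 z (by rw [Walk.support_cons]; exact List.mem_cons_of_mem _ hz)
    have hcu : comp u = 0 := h0 u (by rw [Walk.support_cons]; exact List.mem_cons_self)
    have hcu' : comp u' = 0 := h0' u' q.start_mem_support
    obtain ⟨s0, hs0or, hs0⟩ : ∃ s0 : ZMod 18, (s0 = 1 ∨ s0 = -1) ∧ posZ u' = posZ u + s0 := by
      rcases fact_step u u' h hcu hcu' with h' | h'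
      · exact ⟨1, Or.inl rfl, h'⟩
      · exact ⟨-1, Or.inr rfl, by rw [h']; ring⟩
    have hget1 : (Walk.cons h q).getVert 1 = u' := by
      rw [show (1:ℕ) = 0 + 1 from rfl, Walk.getVert_cons_succ, Walk.getVert_zero]
    by_cases hq0 : q.length = 0
    · have huw : u' = w := Walk.eq_of_length_eq_zero hq0
      refine ⟨s0, hs0or, ?_, fun _ => by rw [hget1, hs0]⟩
      rw [Walk.length_cons, hq0]
      rw [← huw, hs0]
      push_cast
      try ring
    · obtain ⟨s, hsor, hb, hfirst⟩ := ih hnd.2 h0'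
      by_cases hss : s = s0
      · subst hss
        refine ⟨s, hs0or, ?_, fun _ => by rw [hget1, hs0]⟩
        rw [Walk.length_cons, hb, hs0]
        push_cast
        ring
      · exfalso
        have hneg : s = -s0 := by
          rcases hsor with rfl | rfl <;> rcases hs0or with h1 | h1 <;>
            first
              | (exact absurd h1.symm hss)
              | (rw [h1]; try ring)
        have h1' := hfirst hq0
        have hpos : posZ (q.getVert 1) = posZ u := by
          rw [h1', hneg, hs0]; ring
        have hmem : q.getVert 1 ∈ q.support :=
          Walk.mem_support_iff_exists_getVert.mpr ⟨1, rfl, by omega⟩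
        have heq := fact_posinj _ _ (h0' _ hmem) hcu hpos
        exact hnd.1 (heq ▸ hmem)

lemma arc {a b : Fin 38} (p : G38.Walk a b) (hnd : p.support.Nodup)
    (h0 : ∀ z ∈ p.support, comp z = 0)
    (hab : (a = 0 ∧ b = 9) ∨ (a = 9 ∧ b = 0)) : p.length ≤ 9 := by
  obtain ⟨s, hsor, hb, -⟩ := dir p hnd h0
  have hsupl := p.length_support
  have hlen17 : p.length ≤ 17 := by
    have h1 := len_le p.support hnd h0
    rw [fact_card0] at h1
    omega
  have hdiff : posZ b - posZ a = 9 ∨ posZ b - posZ a = -9 := by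
    rcases hab with ⟨rfl, rfl⟩ | ⟨rfl, rfl⟩
    · left; decide
    · right; decide
  have hd : (p.length : ZMod 18) * s = posZ b - posZ a := by rw [hb]; ring
  have hne : (-9 : ZMod 18) = 9 := by decide
  have h99 : (p.length : ZMod 18) = 9 ∨ (p.length : ZMod 18) = -9 := by
    rcases hsor with rfl | rfl <;> rcases hdiff with h' | h'
    · rw [mul_one] at hd; exact Or.inl (hd.trans h')
    · rw [mul_one] at hd; exact Or.inr (hd.trans h')
    · rw [mul_neg_one] at hd
      have hx : (p.length : ZMod 18) = -(posZ b - posZ a) := by rw [← hd, neg_neg]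
      exact Or.inr (by rw [hx, h'])
    · rw [mul_neg_one] at hd
      have hx : (p.length : ZMod 18) = -(posZ b - posZ a) := by rw [← hd, neg_neg]
      exact Or.inl (by rw [hx, h', neg_neg])
  have h9 : (p.length : ZMod 18) = 9 := by
    rcases h99 with h' | h'
    · exact h'
    · exact h'.trans hne
  have hv := congrArg ZMod.val h9
  rw [ZMod.val_natCast_of_lt (by omega : p.length < 18)] at hv
  rw [hv]
  decide

lemma decomp {w : Fin 38} (d : G38.Walk w w) (hc : d.IsCycle) :
    ∃ (a b' : Fin 38) (_ : G38.Adj w a) (_ : G38.Adj w b') (r : G38.Walk b' a),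
      d.length = r.length + 2 ∧ r.support.Nodup ∧ w ∉ r.support ∧
      ∀ z ∈ r.support, z ∈ d.support := by
  cases d with
  | nil => exact absurd rfl hc.ne_nil
  | @cons _ u _ h q =>
    have hq : q.IsPath := ((Walk.cons_isCycle_iff q h).mp hc).1
    cases hqr : q.reverse with
    | nil => exact absurd h (G38.loopless.irrefl w)
    | @cons _ b' _ h2 r =>
      have hql : q.reverse.length = r.length + 1 := by rw [hqr, Walk.length_cons]
      rw [Walk.length_reverse] at hql
      have hsup : q.support.reverse = w :: r.support := by
        rw [← Walk.support_reverse, hqr, Walk.support_cons]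
      have hnd : (w :: r.support).Nodup := by
        rw [← hsup]
        exact List.nodup_reverse.mpr hq.support_nodup
      rw [List.nodup_cons] at hnd
      refine ⟨u, b', h, h2, r, ?_, hnd.2, hnd.1, ?_⟩
      · rw [Walk.length_cons]; omega
      · intro z hz
        have hz2 : z ∈ q.support := by
          have : z ∈ q.support.reverse := by rw [hsup]; exact List.mem_cons_of_mem _ hz
          exact List.mem_reverse.mp this
        rw [Walk.support_cons]
        exact List.mem_cons_of_mem _ hz2

end WalkLemmas

section MainBound

open SimpleGraph.Walk

lemma clique_card (k : ℕ) (hk : k = 3 ∨ k = 4 ∨ k = 5) :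
    (Finset.univ.filter (fun z : Fin 38 => comp z = k)).card = 6 := by
  rcases hk with rfl | rfl | rfl
  exacts [fact_card3, fact_card4, fact_card5]

lemma clique_len {a b : Fin 38} (r : G38.Walk a b) (hnd : r.support.Nodup)
    (hcomp : ∀ z ∈ r.support, comp z = comp a) (hk : comp a = 3 ∨ comp a = 4 ∨ comp a = 5) :
    r.length ≤ 5 := by
  have h1 := len_le r.support hnd hcomp
  rw [clique_card _ hk] at h1
  have := r.length_support
  omega

lemma walk_self_nil {a : Fin 38} (r : G38.Walk a a) (hnd : r.support.Nodup) : r.length = 0 := by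
  cases r with
  | nil => rfl
  | cons h3 r3 =>
    exfalso
    rw [Walk.support_cons, List.nodup_cons] at hnd
    exact hnd.1 r3.end_mem_support

lemma single_side {w uni : Fin 38} {a b' : Fin 38}
    (hNw : ∀ z : Fin 38, G38.Adj w z → comp z = 0 → z = uni)
    (hNwc : ∀ z : Fin 38, G38.Adj w z → comp z = 0 ∨ comp z = 3 ∨ comp z = 4 ∨ comp z = 5)
    (h1 : G38.Adj w a) (h2 : G38.Adj w b') (r : G38.Walk b' a)
    (hnd : r.support.Nodup)
    (hne : ∀ z ∈ r.support, z ≠ 18 ∧ z ≠ 19)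
    (hlen0 : r.length ≠ 0) : r.length ≤ 5 := by
  have hco := confine r hne
  have hcab : comp a = comp b' := hco a r.end_mem_support
  rcases hNwc b' h2 with h0 | hk
  · exfalso
    have hb : b' = uni := hNw b' h2 h0
    have ha : a = uni := hNw a h1 (by rw [hcab, h0])
    subst hb
    subst ha
    exact hlen0 (walk_self_nil r hnd)
  · exact clique_len r hnd hco hk

lemma bound19 (d : G38.Walk 19 19) (hc : d.IsCycle) (h18 : (18:Fin 38) ∉ d.support) :
    d.length ≤ 18 := by
  obtain ⟨a, b', h1, h2, r, hlen, hnd, hwr, hsub⟩ := decomp d hc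
  have hne : ∀ z ∈ r.support, z ≠ 18 ∧ z ≠ 19 :=
    fun z hz => ⟨fun h => h18 (h ▸ hsub z hz), fun h => hwr (h ▸ hz)⟩
  have h3 := hc.three_le_length
  have h5 : r.length ≤ 5 := single_side fact_NY fact_NY_comp h1 h2 r hnd hne (by omega)
  omega

lemma bound18 (d : G38.Walk 18 18) (hc : d.IsCycle) : d.length ≤ 18 := by
  obtain ⟨a, b', h1, h2, r, hlen, hnd, hwr, hsub⟩ := decomp d hc
  have h3 := hc.three_le_length
  by_cases hY : (19 : Fin 38) ∈ r.support
  case neg =>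
    have hne : ∀ z ∈ r.support, z ≠ 18 ∧ z ≠ 19 :=
      fun z hz => ⟨fun h => hwr (h ▸ hz), fun h => hY (h ▸ hz)⟩
    have h5 : r.length ≤ 5 := single_side fact_NX fact_NX_comp h1 h2 r hnd hne (by omega)
    omega
  case pos =>
    have hspec : (r.takeUntil 19 hY).append (r.dropUntil 19 hY) = r := r.take_spec hY
    have hlen12 : (r.takeUntil 19 hY).length + (r.dropUntil 19 hY).length = r.length := by
      have := congrArg Walk.length hspec; rwa [Walk.length_append] at this
    have hsupp : r.support = (r.takeUntil 19 hY).support ++ (r.dropUntil 19 hY).support.tail := by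
      have h' := Walk.support_append (r.takeUntil 19 hY) (r.dropUntil 19 hY)
      rw [hspec] at h'
      exact h'
    have hnds : (r.takeUntil 19 hY).support.Nodup ∧ (r.dropUntil 19 hY).support.tail.Nodup ∧
        (r.takeUntil 19 hY).support.Disjoint (r.dropUntil 19 hY).support.tail := by
      rw [hsupp, List.nodup_append] at hnd; exact ⟨hnd.1, hnd.2.1, fun x hx1 hx2 => hnd.2.2 x hx1 x hx2 rfl⟩
    obtain ⟨hnd1, hndt2, hdisj⟩ := hnds
    have hb19 : b' ≠ 19 := fun h => fact_XY (h ▸ h2)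
    have ha19 : a ≠ 19 := fun h => fact_XY (h ▸ h1)
    -- decompose t1 from its end
    cases hqt : (r.takeUntil 19 hY).reverse with
    | nil => exact absurd rfl hb19
    | @cons _ a1 _ h3' r1 =>
      have ht1l : (r.takeUntil 19 hY).length = r1.length + 1 := by
        have := congrArg Walk.length hqt
        rwa [Walk.length_cons, Walk.length_reverse] at this
      have hsup1 : (r.takeUntil 19 hY).support.reverse = 19 :: r1.support := by
        rw [← Walk.support_reverse, hqt, Walk.support_cons]
      have hnd1' : ((19 : Fin 38) :: r1.support).Nodup := by
        rw [← hsup1]; exact List.nodup_reverse.mpr hnd1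
      rw [List.nodup_cons] at hnd1'
      have hsub1t : ∀ z ∈ r1.support, z ∈ (r.takeUntil 19 hY).support := by
        intro z hz
        exact List.mem_reverse.mp (by rw [hsup1]; exact List.mem_cons_of_mem _ hz)
      have hsub1 : ∀ z ∈ r1.support, z ∈ r.support := by
        intro z hz
        rw [hsupp]; exact List.mem_append_left _ (hsub1t z hz)
      have hne1 : ∀ z ∈ r1.support, z ≠ 18 ∧ z ≠ 19 :=
        fun z hz => ⟨fun h => hwr (h ▸ hsub1 z hz), fun h => hnd1'.1 (h ▸ hz)⟩
      have hco1 := confine r1 hne1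
      have hcb1 : comp b' = comp a1 := hco1 b' r1.end_mem_support
      -- decompose t2 at its start
      cases ht2 : r.dropUntil 19 hY with
      | nil => exact absurd rfl ha19
      | @cons _ a2 _ h4 r2 =>
        have ht2l : (r.dropUntil 19 hY).length = r2.length + 1 := by
          rw [ht2, Walk.length_cons]
        have hr2tail : r2.support = (r.dropUntil 19 hY).support.tail := by
          rw [ht2, Walk.support_cons, List.tail_cons]
        have hnd2 : r2.support.Nodup := hr2tail ▸ hndt2
        have h19t1 : (19 : Fin 38) ∈ (r.takeUntil 19 hY).support :=
          (r.takeUntil 19 hY).end_mem_support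
        have h19r2 : (19 : Fin 38) ∉ r2.support := by
          intro hzz
          exact hdisj h19t1 (hr2tail ▸ hzz)
        have hsub2 : ∀ z ∈ r2.support, z ∈ r.support := by
          intro z hz
          rw [hsupp]; exact List.mem_append_right _ (hr2tail ▸ hz)
        have hne2 : ∀ z ∈ r2.support, z ≠ 18 ∧ z ≠ 19 :=
          fun z hz => ⟨fun h => hwr (h ▸ hsub2 z hz), fun h => h19r2 (h ▸ hz)⟩
        have hco2 := confine r2 hne2
        have hca2 : comp a = comp a2 := hco2 a r2.end_mem_support
        rcases fact_NX_comp b' h2 with hk1 | hk1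
        · have hb0 : b' = 0 := fact_NX b' h2 hk1
          have ha1c : comp a1 = 0 := by rw [← hcb1]; exact hk1
          have ha1v : a1 = 9 := fact_NY a1 h3' ha1c
          have harc1 : r1.length ≤ 9 :=
            arc r1 hnd1'.2 (fun z hz => by rw [hco1 z hz, ha1c]) (Or.inr ⟨ha1v, hb0⟩)
          rcases fact_NX_comp a h1 with hk2 | hk2
          · exfalso
            have ha2c : comp a2 = 0 := by rw [← hca2]; exact hk2
            have ha2v : a2 = 9 := fact_NY a2 h4 ha2c
            have h9r1 : (9 : Fin 38) ∈ r1.support := ha1v ▸ r1.start_mem_support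
            have h9r2 : (9 : Fin 38) ∈ r2.support := ha2v ▸ r2.start_mem_support
            exact hdisj (hsub1t _ h9r1) (hr2tail ▸ h9r2)
          · have hk2' : comp a2 = 3 ∨ comp a2 = 4 ∨ comp a2 = 5 := by rw [← hca2]; exact hk2
            have hr2l : r2.length ≤ 5 := clique_len r2 hnd2 hco2 hk2'
            omega
        · have hk1' : comp a1 = 3 ∨ comp a1 = 4 ∨ comp a1 = 5 := by rw [← hcb1]; exact hk1
          have hr1l : r1.length ≤ 5 := clique_len r1 hnd1'.2 hco1 hk1'
          rcases fact_NX_comp a h1 with hk2 | hk2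
          · have ha0 : a = 0 := fact_NX a h1 hk2
            have ha2c : comp a2 = 0 := by rw [← hca2]; exact hk2
            have ha2v : a2 = 9 := fact_NY a2 h4 ha2c
            have harc2 : r2.length ≤ 9 :=
              arc r2 hnd2 (fun z hz => by rw [hco2 z hz, ha2c]) (Or.inr ⟨ha2v, ha0⟩)
            omega
          · have hk2' : comp a2 = 3 ∨ comp a2 = 4 ∨ comp a2 = 5 := by rw [← hca2]; exact hk2
            have hr2l : r2.length ≤ 5 := clique_len r2 hnd2 hco2 hk2'
            omega

lemma length_rotate {w b : Fin 38} (c : G38.Walk b b) (h : w ∈ c.support) :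
    (c.rotate w h).length = c.length := by
  have h1 := congrArg Walk.length (c.take_spec h)
  rw [Walk.length_append] at h1
  have h2 : (c.rotate w h).length = (c.dropUntil w h).length + (c.takeUntil w h).length := by
    simp [Walk.rotate, Walk.length_append]
  omega

lemma main_bound (b : Fin 38) (c' : G38.Walk b b) (hc : c'.IsCycle) : c'.length ≤ 18 := by
  by_cases h18 : (18 : Fin 38) ∈ c'.support
  · have hb := bound18 (c'.rotate 18 h18) (hc.rotate h18)
    rwa [length_rotate] at hb
  · by_cases h19 : (19 : Fin 38) ∈ c'.support
    · have h18d : (18 : Fin 38) ∉ (c'.rotate 19 h19).support := by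
        intro hmem
        have hrot := c'.support_rotate 19 h19
        rw [(c'.rotate 19 h19).support_eq_cons] at hmem
        rcases List.mem_cons.mp hmem with h' | h'
        · exact (by decide : (18:Fin 38) ≠ 19) h'
        · exact h18 (List.mem_of_mem_tail (hrot.mem_iff.mp h'))
      have hb := bound19 (c'.rotate 19 h19) (hc.rotate h19) h18d
      rwa [length_rotate] at hb
    · have hne : ∀ z ∈ c'.support, z ≠ 18 ∧ z ≠ 19 :=
        fun z hz => ⟨fun h => h18 (h ▸ hz), fun h => h19 (h ▸ hz)⟩
      have hco := confine c' hne
      have hlenb := len_le c'.support.tail hc.support_nodup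
        (fun z hz => hco z (List.mem_of_mem_tail hz))
      have hcard := fact_card_all b
      have hsl := c'.length_support
      have htl : c'.support.tail.length = c'.support.length - 1 := by
        rw [List.length_tail]
      omega

end MainBound

section Connectivity

def rootF : Fin 38 → Fin 38 := fun v => if v.val = 0 then 1 else 0

def distT : List (List ℕ) := [
  [0, 0, 1, 2, 3, 4, 5, 6, 7, 8, 9, 10, 11, 12, 13, 14, 15, 16, 11, 9, 10, 10, 10, 10, 10, 10, 10, 10, 10, 10, 10, 10, 10, 10, 10, 10, 10, 10],
  [0, 0, 11, 10, 9, 8, 7, 6, 5, 4, 5, 6, 6, 5, 4, 3, 2, 1, 1, 3, 2, 2, 2, 2, 2, 2, 2, 2, 2, 2, 2, 2, 2, 2, 2, 2, 2, 2],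
  [0, 1, 0, 10, 9, 8, 7, 6, 5, 4, 5, 6, 6, 5, 4, 3, 2, 1, 1, 3, 2, 2, 2, 2, 2, 2, 2, 2, 2, 2, 2, 2, 2, 2, 2, 2, 2, 2],
  [0, 1, 2, 0, 9, 8, 7, 6, 5, 4, 5, 6, 6, 5, 4, 3, 2, 1, 1, 3, 2, 2, 2, 2, 2, 2, 2, 2, 2, 2, 2, 2, 2, 2, 2, 2, 2, 2],
  [0, 1, 2, 3, 0, 8, 7, 6, 5, 4, 5, 6, 6, 5, 4, 3, 2, 1, 1, 3, 2, 2, 2, 2, 2, 2, 2, 2, 2, 2, 2, 2, 2, 2, 2, 2, 2, 2],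
  [0, 1, 2, 3, 4, 0, 7, 6, 5, 4, 5, 6, 6, 5, 4, 3, 2, 1, 1, 3, 2, 2, 2, 2, 2, 2, 2, 2, 2, 2, 2, 2, 2, 2, 2, 2, 2, 2],
  [0, 1, 2, 3, 4, 5, 0, 6, 5, 4, 5, 6, 6, 5, 4, 3, 2, 1, 1, 3, 2, 2, 2, 2, 2, 2, 2, 2, 2, 2, 2, 2, 2, 2, 2, 2, 2, 2],
  [0, 1, 2, 3, 4, 5, 6, 0, 5, 4, 5, 6, 6, 5, 4, 3, 2, 1, 1, 3, 2, 2, 2, 2, 2, 2, 2, 2, 2, 2, 2, 2, 2, 2, 2, 2, 2, 2],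
  [0, 1, 2, 3, 4, 5, 6, 7, 0, 4, 5, 6, 6, 5, 4, 3, 2, 1, 1, 3, 2, 2, 2, 2, 2, 2, 2, 2, 2, 2, 2, 2, 2, 2, 2, 2, 2, 2],
  [0, 1, 2, 3, 4, 5, 6, 7, 8, 0, 8, 7, 6, 5, 4, 3, 2, 1, 1, 3, 2, 2, 2, 2, 2, 2, 2, 2, 2, 2, 2, 2, 2, 2, 2, 2, 2, 2],
  [0, 1, 2, 3, 4, 5, 6, 6, 5, 4, 0, 7, 6, 5, 4, 3, 2, 1, 1, 3, 2, 2, 2, 2, 2, 2, 2, 2, 2, 2, 2, 2, 2, 2, 2, 2, 2, 2],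
  [0, 1, 2, 3, 4, 5, 6, 6, 5, 4, 5, 0, 6, 5, 4, 3, 2, 1, 1, 3, 2, 2, 2, 2, 2, 2, 2, 2, 2, 2, 2, 2, 2, 2, 2, 2, 2, 2],
  [0, 1, 2, 3, 4, 5, 6, 6, 5, 4, 5, 6, 0, 5, 4, 3, 2, 1, 1, 3, 2, 2, 2, 2, 2, 2, 2, 2, 2, 2, 2, 2, 2, 2, 2, 2, 2, 2],
  [0, 1, 2, 3, 4, 5, 6, 6, 5, 4, 5, 6, 7, 0, 4, 3, 2, 1, 1, 3, 2, 2, 2, 2, 2, 2, 2, 2, 2, 2, 2, 2, 2, 2, 2, 2, 2, 2],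
  [0, 1, 2, 3, 4, 5, 6, 6, 5, 4, 5, 6, 7, 8, 0, 3, 2, 1, 1, 3, 2, 2, 2, 2, 2, 2, 2, 2, 2, 2, 2, 2, 2, 2, 2, 2, 2, 2],
  [0, 1, 2, 3, 4, 5, 6, 6, 5, 4, 5, 6, 7, 8, 9, 0, 2, 1, 1, 3, 2, 2, 2, 2, 2, 2, 2, 2, 2, 2, 2, 2, 2, 2, 2, 2, 2, 2],
  [0, 1, 2, 3, 4, 5, 6, 6, 5, 4, 5, 6, 7, 8, 9, 10, 0, 1, 1, 3, 2, 2, 2, 2, 2, 2, 2, 2, 2, 2, 2, 2, 2, 2, 2, 2, 2, 2],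
  [0, 1, 2, 3, 4, 5, 6, 6, 5, 4, 5, 6, 7, 8, 9, 10, 11, 0, 1, 3, 2, 2, 2, 2, 2, 2, 2, 2, 2, 2, 2, 2, 2, 2, 2, 2, 2, 2],
  [0, 1, 2, 3, 4, 5, 6, 7, 8, 9, 8, 7, 6, 5, 4, 3, 2, 1, 0, 10, 11, 11, 11, 11, 11, 11, 11, 11, 11, 11, 11, 11, 11, 11, 11, 11, 11, 11],
  [0, 1, 2, 3, 4, 5, 6, 7, 8, 9, 8, 7, 6, 5, 4, 3, 2, 1, 1, 0, 2, 2, 2, 2, 2, 2, 2, 2, 2, 2, 2, 2, 2, 2, 2, 2, 2, 2],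
  [0, 1, 2, 3, 4, 5, 6, 6, 5, 4, 5, 6, 6, 5, 4, 3, 2, 1, 1, 3, 0, 2, 2, 2, 2, 2, 2, 2, 2, 2, 2, 2, 2, 2, 2, 2, 2, 2],
  [0, 1, 2, 3, 4, 5, 6, 6, 5, 4, 5, 6, 6, 5, 4, 3, 2, 1, 1, 3, 2, 0, 2, 2, 2, 2, 2, 2, 2, 2, 2, 2, 2, 2, 2, 2, 2, 2],
  [0, 1, 2, 3, 4, 5, 6, 6, 5, 4, 5, 6, 6, 5, 4, 3, 2, 1, 1, 3, 2, 2, 0, 2, 2, 2, 2, 2, 2, 2, 2, 2, 2, 2, 2, 2, 2, 2],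
  [0, 1, 2, 3, 4, 5, 6, 6, 5, 4, 5, 6, 6, 5, 4, 3, 2, 1, 1, 3, 2, 2, 2, 0, 2, 2, 2, 2, 2, 2, 2, 2, 2, 2, 2, 2, 2, 2],
  [0, 1, 2, 3, 4, 5, 6, 6, 5, 4, 5, 6, 6, 5, 4, 3, 2, 1, 1, 3, 2, 2, 2, 2, 0, 2, 2, 2, 2, 2, 2, 2, 2, 2, 2, 2, 2, 2],
  [0, 1, 2, 3, 4, 5, 6, 6, 5, 4, 5, 6, 6, 5, 4, 3, 2, 1, 1, 3, 2, 2, 2, 2, 2, 0, 2, 2, 2, 2, 2, 2, 2, 2, 2, 2, 2, 2],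
  [0, 1, 2, 3, 4, 5, 6, 6, 5, 4, 5, 6, 6, 5, 4, 3, 2, 1, 1, 3, 2, 2, 2, 2, 2, 2, 0, 2, 2, 2, 2, 2, 2, 2, 2, 2, 2, 2],
  [0, 1, 2, 3, 4, 5, 6, 6, 5, 4, 5, 6, 6, 5, 4, 3, 2, 1, 1, 3, 2, 2, 2, 2, 2, 2, 2, 0, 2, 2, 2, 2, 2, 2, 2, 2, 2, 2],
  [0, 1, 2, 3, 4, 5, 6, 6, 5, 4, 5, 6, 6, 5, 4, 3, 2, 1, 1, 3, 2, 2, 2, 2, 2, 2, 2, 2, 0, 2, 2, 2, 2, 2, 2, 2, 2, 2],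
  [0, 1, 2, 3, 4, 5, 6, 6, 5, 4, 5, 6, 6, 5, 4, 3, 2, 1, 1, 3, 2, 2, 2, 2, 2, 2, 2, 2, 2, 0, 2, 2, 2, 2, 2, 2, 2, 2],
  [0, 1, 2, 3, 4, 5, 6, 6, 5, 4, 5, 6, 6, 5, 4, 3, 2, 1, 1, 3, 2, 2, 2, 2, 2, 2, 2, 2, 2, 2, 0, 2, 2, 2, 2, 2, 2, 2],
  [0, 1, 2, 3, 4, 5, 6, 6, 5, 4, 5, 6, 6, 5, 4, 3, 2, 1, 1, 3, 2, 2, 2, 2, 2, 2, 2, 2, 2, 2, 2, 0, 2, 2, 2, 2, 2, 2],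
  [0, 1, 2, 3, 4, 5, 6, 6, 5, 4, 5, 6, 6, 5, 4, 3, 2, 1, 1, 3, 2, 2, 2, 2, 2, 2, 2, 2, 2, 2, 2, 2, 0, 2, 2, 2, 2, 2],
  [0, 1, 2, 3, 4, 5, 6, 6, 5, 4, 5, 6, 6, 5, 4, 3, 2, 1, 1, 3, 2, 2, 2, 2, 2, 2, 2, 2, 2, 2, 2, 2, 2, 0, 2, 2, 2, 2],
  [0, 1, 2, 3, 4, 5, 6, 6, 5, 4, 5, 6, 6, 5, 4, 3, 2, 1, 1, 3, 2, 2, 2, 2, 2, 2, 2, 2, 2, 2, 2, 2, 2, 2, 0, 2, 2, 2],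
  [0, 1, 2, 3, 4, 5, 6, 6, 5, 4, 5, 6, 6, 5, 4, 3, 2, 1, 1, 3, 2, 2, 2, 2, 2, 2, 2, 2, 2, 2, 2, 2, 2, 2, 2, 0, 2, 2],
  [0, 1, 2, 3, 4, 5, 6, 6, 5, 4, 5, 6, 6, 5, 4, 3, 2, 1, 1, 3, 2, 2, 2, 2, 2, 2, 2, 2, 2, 2, 2, 2, 2, 2, 2, 2, 0, 2],
  [0, 1, 2, 3, 4, 5, 6, 6, 5, 4, 5, 6, 6, 5, 4, 3, 2, 1, 1, 3, 2, 2, 2, 2, 2, 2, 2, 2, 2, 2, 2, 2, 2, 2, 2, 2, 2, 0]]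

def fD : Fin 38 → Fin 38 → ℕ := fun v w => (distT.getD v.val []).getD w.val 0

lemma fact_root : ∀ v : Fin 38, rootF v ≠ v := by decide

set_option maxRecDepth 100000 in
lemma fact_conn : ∀ v w : Fin 38, w ≠ v → w ≠ rootF v →
    ∃ w' : Fin 38, w' ≠ v ∧ G38.Adj w w' ∧ fD v w' < fD v w := by decide

lemma conn_of_pot (v : Fin 38) : (G38.induce {u | u ≠ v}).Connected := by
  rw [connected_iff]
  refine ⟨?_, ⟨⟨rootF v, fact_root v⟩⟩⟩
  have key : ∀ (N : ℕ) (a : {u : Fin 38 // u ≠ v}), fD v a.val ≤ N →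
      (G38.induce {u | u ≠ v}).Reachable a ⟨rootF v, fact_root v⟩ := by
    intro N
    induction N with
    | zero =>
      intro a ha
      by_cases h0 : a.val = rootF v
      · have : a = ⟨rootF v, fact_root v⟩ := Subtype.ext h0
        rw [this]
      · obtain ⟨w', hw1, hw2, hw3⟩ := fact_conn v a.val a.prop h0
        omega
    | succ N ih =>
      intro a ha
      by_cases h0 : a.val = rootF v
      · have : a = ⟨rootF v, fact_root v⟩ := Subtype.ext h0
        rw [this]
      · obtain ⟨w', hw1, hw2, hw3⟩ := fact_conn v a.val a.prop h0
        have hadj : (G38.induce {u : Fin 38 | u ≠ v}).Adj a ⟨w', hw1⟩ := hw2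
        have hle : fD v w' ≤ N := by omega
        exact hadj.reachable.trans (ih ⟨w', hw1⟩ hle)
  intro a b
  exact (key (fD v a.val) a le_rfl).trans (key (fD v b.val) b le_rfl).symm

end Connectivity

section K15

def clsN (c w : ℕ) : ℕ :=
  if c < 18 then (if w = (c+1) % 18 then 0 else if w = (c+17) % 18 then 1 else 2)
  else if c < 20 then (if w < 18 then 0 else if w < 26 then 1 else if w < 32 then 2 else 3)
  else if w = 18 then 1 else if w = 19 then 2 else 0

def clsF (c w : Fin 38) : Fin 4 := ⟨clsN c.val w.val % 4, Nat.mod_lt _ (by norm_num)⟩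

lemma fact_cls : ∀ c w1 w2 : Fin 38, G38.Adj c w1 → G38.Adj c w2 → w1 ≠ w2 →
    clsF c w1 = clsF c w2 → G38.Adj w1 w2 := by decide

lemma k15free : ¬ ∃ (c : Fin 38) (l : Fin 5 → Fin 38), Function.Injective l ∧
    (∀ i, G38.Adj c (l i)) ∧ (∀ i j, i ≠ j → ¬ G38.Adj (l i) (l j)) := by
  rintro ⟨c, l, hinj, hadj, hnon⟩
  obtain ⟨i, j, hij, hcls⟩ := Fintype.exists_ne_map_eq_of_card_lt (fun i => clsF c (l i))
      (by simp only [Fintype.card_fin]; omega)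
  exact hnon i j hij (fact_cls c (l i) (l j) (hadj i) (hadj j) (fun h => hij (hinj h)) hcls)

end K15

section Cycle

open SimpleGraph.Walk

def c18 : G38.Walk 0 0 :=
  (Walk.cons (show G38.Adj 0 1 by decide) (Walk.cons (show G38.Adj 1 2 by decide) (Walk.cons (show G38.Adj 2 3 by decide) (Walk.cons (show G38.Adj 3 4 by decide) (Walk.cons (show G38.Adj 4 5 by decide) (Walk.cons (show G38.Adj 5 6 by decide) (Walk.cons (show G38.Adj 6 7 by decide) (Walk.cons (show G38.Adj 7 8 by decide) (Walk.cons (show G38.Adj 8 9 by decide) (Walk.cons (show G38.Adj 9 10 by decide) (Walk.cons (show G38.Adj 10 11 by decide) (Walk.cons (show G38.Adj 11 12 by decide) (Walk.cons (show G38.Adj 12 13 by decide) (Walk.cons (show G38.Adj 13 14 by decide) (Walk.cons (show G38.Adj 14 15 by decide) (Walk.cons (show G38.Adj 15 16 by decide) (Walk.cons (show G38.Adj 16 17 by decide) (Walk.cons (show G38.Adj 17 0 by decide) Walk.nil))))))))))))))))))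

lemma c18_len : c18.length = 18 := by decide

lemma c18_cycle : c18.IsCycle := by
  rw [Walk.isCycle_def]
  refine ⟨?_, ?_, ?_⟩
  · rw [Walk.isTrail_def]
    decide
  · have hfull : c18.support.length = 19 := by decide
    intro h
    rw [h] at hfull
    simp at hfull
  · decide

lemma c18_notmem : (18 : Fin 38) ∉ c18.support := by decide

lemma heavy : 38 ≤ 2 * (G38.neighborSet 18).ncard := by
  have h : (G38.neighborSet 18).ncard = 19 := by
    rw [Set.ncard_eq_toFinset_card']
    decide
  omega

end Cycle

theorem stmt_14 :
    ∃ (n : ℕ) (G : SimpleGraph (Fin n)),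
      (¬ ∃ (c : Fin n) (l : Fin 5 → Fin n), Function.Injective l ∧
        (∀ i, G.Adj c (l i)) ∧ (∀ i j, i ≠ j → ¬ G.Adj (l i) (l j))) ∧
      (3 ≤ n ∧ ∀ v : Fin n, (G.induce {u | u ≠ v}).Connected) ∧
      ∃ (a : Fin n) (c : G.Walk a a), c.IsCycle ∧
        (∀ (b : Fin n) (c' : G.Walk b b), c'.IsCycle → c'.length ≤ c.length) ∧
        ∃ v : Fin n, n ≤ 2 * (G.neighborSet v).ncard ∧ v ∉ c.support := by
  refine ⟨38, G38, k15free, ⟨by norm_num, conn_of_pot⟩, 0, c18, c18_cycle, ?_, 18, heavy, c18_notmem⟩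
  intro b c' hc
  rw [c18_len]
  exact main_bound b c' hc
end

section
/- Let S be a connected graph on at least 3 vertices such that S is not isomorphic to P_3, K_{1,3}, or K_{1,4}. Then S contains K_3, P_4, C_4, or K_{1,5} as an induced subgraph. -/
open SimpleGraph

set_option linter.unusedSectionVars false in
private lemma myK3_emb {V : Type*} {S : SimpleGraph V} {a b c : V}
    (hab : S.Adj a b) (hac : S.Adj a c) (hbc : S.Adj b c) :
    Nonempty ((⊤ : SimpleGraph (Fin 3)) ↪g S) := by
  refine ⟨⟨⟨![a,b,c], ?_⟩, ?_⟩⟩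
  · intro i j h
    fin_cases i <;> fin_cases j <;> simp_all <;>
      exact absurd h (by simp_all [hab.ne, hac.ne, hbc.ne, hab.ne', hac.ne', hbc.ne'])
  · intro i j
    change S.Adj (![a,b,c] i) (![a,b,c] j) ↔ _
    fin_cases i <;> fin_cases j <;>
      simp_all [hab.ne, hac.ne, hbc.ne, hab.ne', hac.ne', hbc.ne', S.adj_comm]

private lemma myP4_emb {V : Type*} {S : SimpleGraph V} {a b c d : V}
    (hab : S.Adj a b) (hbc : S.Adj b c) (hcd : S.Adj c d)
    (hac : ¬ S.Adj a c) (had : ¬ S.Adj a d) (hbd : ¬ S.Adj b d)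
    (nac : a ≠ c) (nad : a ≠ d) (nbd : b ≠ d) :
    Nonempty (pathGraph 4 ↪g S) := by
  refine ⟨⟨⟨![a,b,c,d], ?_⟩, ?_⟩⟩
  · intro i j h
    fin_cases i <;> fin_cases j <;> simp_all [hab.ne, hbc.ne, hcd.ne, nac, nad, nbd]
  · intro i j
    fin_cases i <;> fin_cases j <;>
      first
        | exact iff_of_false (S.loopless.irrefl _) (by rw [pathGraph_adj]; decide)
        | exact iff_of_true hab (by rw [pathGraph_adj]; decide)
        | exact iff_of_true hab.symm (by rw [pathGraph_adj]; decide)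
        | exact iff_of_true hbc (by rw [pathGraph_adj]; decide)
        | exact iff_of_true hbc.symm (by rw [pathGraph_adj]; decide)
        | exact iff_of_true hcd (by rw [pathGraph_adj]; decide)
        | exact iff_of_true hcd.symm (by rw [pathGraph_adj]; decide)
        | exact iff_of_false hac (by rw [pathGraph_adj]; decide)
        | exact iff_of_false (fun h => hac h.symm) (by rw [pathGraph_adj]; decide)
        | exact iff_of_false had (by rw [pathGraph_adj]; decide)
        | exact iff_of_false (fun h => had h.symm) (by rw [pathGraph_adj]; decide)
        | exact iff_of_false hbd (by rw [pathGraph_adj]; decide)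
        | exact iff_of_false (fun h => hbd h.symm) (by rw [pathGraph_adj]; decide)

private lemma myC4_emb {V : Type*} {S : SimpleGraph V} {a b c d : V}
    (hab : S.Adj a b) (hbc : S.Adj b c) (hcd : S.Adj c d)
    (hda : S.Adj d a) (hac : ¬ S.Adj a c) (hbd : ¬ S.Adj b d)
    (nac : a ≠ c) (nbd : b ≠ d) :
    Nonempty (cycleGraph 4 ↪g S) := by
  refine ⟨⟨⟨![a,b,c,d], ?_⟩, ?_⟩⟩
  · intro i j h
    fin_cases i <;> fin_cases j <;> simp_all [hab.ne, hbc.ne, hcd.ne, hda.ne, nac, nbd]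
  · intro i j
    fin_cases i <;> fin_cases j <;>
      first
        | exact iff_of_false (S.loopless.irrefl _) (by rw [cycleGraph_adj]; decide)
        | exact iff_of_true hab (by rw [cycleGraph_adj]; decide)
        | exact iff_of_true hab.symm (by rw [cycleGraph_adj]; decide)
        | exact iff_of_true hbc (by rw [cycleGraph_adj]; decide)
        | exact iff_of_true hbc.symm (by rw [cycleGraph_adj]; decide)
        | exact iff_of_true hcd (by rw [cycleGraph_adj]; decide)
        | exact iff_of_true hcd.symm (by rw [cycleGraph_adj]; decide)
        | exact iff_of_true hda (by rw [cycleGraph_adj]; decide)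
        | exact iff_of_true hda.symm (by rw [cycleGraph_adj]; decide)
        | exact iff_of_false hac (by rw [cycleGraph_adj]; decide)
        | exact iff_of_false (fun h => hac h.symm) (by rw [cycleGraph_adj]; decide)
        | exact iff_of_false hbd (by rw [cycleGraph_adj]; decide)
        | exact iff_of_false (fun h => hbd h.symm) (by rw [cycleGraph_adj]; decide)

private lemma myK15_emb {V : Type*} {S : SimpleGraph V} {v : V} {l : Fin 5 → V}
    (hinj : Function.Injective l)
    (hne : ∀ i, l i ≠ v) (hadj : ∀ i, S.Adj v (l i))
    (hnon : ∀ i j, i ≠ j → ¬ S.Adj (l i) (l j)) :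
    Nonempty (completeBipartiteGraph (Fin 1) (Fin 5) ↪g S) := by
  refine ⟨⟨⟨Sum.elim (fun _ => v) l, ?_⟩, ?_⟩⟩
  · intro i j h
    match i, j with
    | Sum.inl i, Sum.inl j => exact congrArg Sum.inl (Subsingleton.elim i j)
    | Sum.inl i, Sum.inr j => exact absurd h.symm (hne j)
    | Sum.inr i, Sum.inl j => exact absurd h (hne i)
    | Sum.inr i, Sum.inr j => simpa using hinj h
  · intro i j
    match i, j with
    | Sum.inl i, Sum.inl j => exact iff_of_false (S.loopless.irrefl v) (by simp)
    | Sum.inl i, Sum.inr j => exact iff_of_true (hadj j) (by simp)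
    | Sum.inr i, Sum.inl j => exact iff_of_true (hadj i).symm (by simp)
    | Sum.inr i, Sum.inr j =>
      simp only [completeBipartiteGraph, Sum.elim_inr]
      refine iff_of_false ?_ (by simp)
      intro h
      exact hnon i j (fun he => (S.loopless.irrefl _ (he ▸ h))) h

private lemma myStar_iso {V : Type*} [Fintype V] [DecidableEq V] {S : SimpleGraph V} {v : V}
    (h : ∀ a b, S.Adj a b ↔ (a = v ∧ b ≠ v) ∨ (b = v ∧ a ≠ v))
    {n : ℕ} (hn : Fintype.card {u // u ≠ v} = n) :
    Nonempty (S ≃g completeBipartiteGraph (Fin 1) (Fin n)) := by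
  let e0 : {u // u ≠ v} ≃ Fin n := Fintype.equivFinOfCardEq hn
  refine ⟨⟨⟨fun u => if hu : u = v then Sum.inl 0 else Sum.inr (e0 ⟨u, hu⟩),
    Sum.elim (fun _ => v) (fun i => (e0.symm i).val), ?_, ?_⟩, ?_⟩⟩
  · intro u
    by_cases hu : u = v <;> simp [hu]
  · intro x
    match x with
    | Sum.inl i => simp [Subsingleton.elim i 0]
    | Sum.inr i =>
      have : ((e0.symm i).val ≠ v) := (e0.symm i).2
      simp [this]
  · intro a b
    by_cases ha : a = v <;> by_cases hb : b = v <;>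
      simp [ha, hb, h, Equiv.apply_eq_iff_eq]

private lemma myBridge_iso : Nonempty (completeBipartiteGraph (Fin 1) (Fin 2) ≃g pathGraph 3) := by
  refine ⟨⟨⟨Sum.elim (fun _ => (1 : Fin 3)) ![0, 2],
    ![Sum.inr 0, Sum.inl 0, Sum.inr 1], ?_, ?_⟩, ?_⟩⟩
  · intro x
    match x with
    | Sum.inl i => simp [Subsingleton.elim i 0]
    | Sum.inr i => fin_cases i <;> rfl
  · intro x; fin_cases x <;> rfl
  · rintro (i | i) (j | j) <;> fin_cases i <;> fin_cases j <;>
      simp [pathGraph_adj]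

set_option linter.unusedSectionVars false in
private lemma myWalk_conf {V : Type*} {S : SimpleGraph V}
    (hd : ∀ z y1 y2, S.Adj z y1 → S.Adj z y2 → y1 = y2)
    {a x : V} (p : S.Walk a x) : ∀ b, S.Adj a b → x = a ∨ x = b := by
  induction p with
  | nil => exact fun b _ => Or.inl rfl
  | @cons u y x' h q ih =>
    intro b hub
    obtain rfl : y = b := hd u y b h hub
    rcases ih u h.symm with rfl | rfl
    · exact Or.inr rfl
    · exact Or.inl rfl

theorem stmt_16 {V : Type*} [Fintype V] [DecidableEq V] (S : SimpleGraph V)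
    (hconn : S.Connected) (hcard : 3 ≤ Fintype.card V)
    (hP3 : ¬ Nonempty (S ≃g pathGraph 3))
    (hK13 : ¬ Nonempty (S ≃g completeBipartiteGraph (Fin 1) (Fin 3)))
    (hK14 : ¬ Nonempty (S ≃g completeBipartiteGraph (Fin 1) (Fin 4))) :
    Nonempty ((⊤ : SimpleGraph (Fin 3)) ↪g S) ∨
    Nonempty (pathGraph 4 ↪g S) ∨
    Nonempty (cycleGraph 4 ↪g S) ∨
    Nonempty (completeBipartiteGraph (Fin 1) (Fin 5) ↪g S) := by
  classical
  by_contra hcon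
  push_neg at hcon
  obtain ⟨h1, h2, h3, h4⟩ := hcon
  have hK3 : ∀ a b c : V, S.Adj a b → S.Adj a c → S.Adj b c → False :=
    fun a b c hab hac hbc => (not_nonempty_iff.mpr h1) (myK3_emb hab hac hbc)
  -- Step B: find a vertex with two distinct neighbors
  obtain ⟨v, y1, y2, hy12, hvy1, hvy2⟩ :
      ∃ v y1 y2 : V, y1 ≠ y2 ∧ S.Adj v y1 ∧ S.Adj v y2 := by
    by_cases hd : ∀ z y1 y2 : V, S.Adj z y1 → S.Adj z y2 → y1 = y2
    · exfalso
      obtain ⟨a, b, c, hab, hac, hbc⟩ := (Fintype.two_lt_card_iff (α := V)).mp (by omega)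
      obtain ⟨p⟩ := hconn.preconnected a b
      have hlen : 0 < p.length := by
        rcases Nat.eq_zero_or_pos p.length with h0 | h
        · exact absurd (Walk.eq_of_length_eq_zero h0) hab
        · exact h
      have hadj1 : S.Adj a (p.getVert 1) := by
        simpa [p.getVert_zero] using p.adj_getVert_succ hlen
      obtain ⟨q⟩ := hconn.preconnected a c
      rcases myWalk_conf hd p _ hadj1 with hb | hb
      · exact hab hb.symm
      · rcases myWalk_conf hd q _ hadj1 with hc | hc
        · exact hac hc.symm
        · exact hbc (hb.trans hc.symm)
    · push_neg at hd
      obtain ⟨z, u1, u2, h1', h2', h3'⟩ := hd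
      exact ⟨z, u1, u2, h3', h1', h2'⟩
  -- Step C: every other vertex is adjacent to v
  have hstar : ∀ u, u ≠ v → S.Adj v u := by
    by_contra hcon2
    push_neg at hcon2
    obtain ⟨u, huv, hnadj⟩ := hcon2
    obtain ⟨p⟩ := hconn.preconnected v u
    have hex : ∃ i, p.getVert i ≠ v ∧ ¬ S.Adj v (p.getVert i) := by
      refine ⟨p.length, ?_, ?_⟩ <;> rw [p.getVert_length]
      exacts [huv, hnadj]
    let k := Nat.find hex
    obtain ⟨hk1, hk2⟩ : p.getVert k ≠ v ∧ ¬ S.Adj v (p.getVert k) := Nat.find_spec hex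
    have hkpos : 0 < k := by
      rcases Nat.eq_zero_or_pos k with h0 | h
      · exfalso; apply hk1; rw [show k = 0 from h0, p.getVert_zero]
      · exact h
    have hklen : k ≤ p.length := Nat.find_min' hex ⟨by rw [p.getVert_length]; exact huv,
      by rw [p.getVert_length]; exact hnadj⟩
    have hprev := Nat.find_min hex (show k - 1 < k by omega)
    push_neg at hprev
    have hadjwx : S.Adj (p.getVert (k-1)) (p.getVert k) := by
      have := p.adj_getVert_succ (show k - 1 < p.length by omega)
      rwa [show k - 1 + 1 = k by omega] at this
    by_cases hwv : p.getVert (k-1) = v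
    · rw [hwv] at hadjwx; exact hk2 hadjwx
    · have hvw : S.Adj v (p.getVert (k-1)) := hprev hwv
      set w := p.getVert (k-1) with hw
      set x := p.getVert k with hx
      -- second neighbor x' of v distinct from w
      obtain ⟨x', hvx', hx'w⟩ : ∃ x', S.Adj v x' ∧ x' ≠ w := by
        by_cases h : y1 = w
        · exact ⟨y2, hvy2, fun he => hy12 (h ▸ he ▸ rfl)⟩
        · exact ⟨y1, hvy1, h⟩
      have hwx' : ¬ S.Adj w x' := fun h => hK3 v w x' hvw hvx' h
      have hxx' : x ≠ x' := fun he => hk2 (he ▸ hvx')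
      have hxw : x ≠ w := fun he => hk2 (he ▸ hvw)
      by_cases hux : S.Adj x x'
      · exact (not_nonempty_iff.mpr h3) (myC4_emb hvw hadjwx hux hvx'.symm hk2 hwx'
          (fun he => hk1 he.symm) hx'w.symm)
      · exact (not_nonempty_iff.mpr h2) (myP4_emb hvx'.symm hvw hadjwx
          (fun h => hwx' h.symm) (fun h => hux h.symm) hk2
          hx'w (fun h => hxx' h.symm) (fun h => hk1 h.symm))
  have hleaf : ∀ a b : V, a ≠ v → b ≠ v → ¬ S.Adj a b :=
    fun a b ha hb hab => hK3 v a b (hstar a ha) (hstar b hb) hab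
  have h_adj_iff : ∀ a b, S.Adj a b ↔ (a = v ∧ b ≠ v) ∨ (b = v ∧ a ≠ v) := by
    intro a b
    constructor
    · intro hab
      by_cases ha : a = v
      · exact Or.inl ⟨ha, fun hb => S.loopless.irrefl v (by rw [ha, hb] at hab; exact hab)⟩
      · by_cases hb : b = v
        · exact Or.inr ⟨hb, ha⟩
        · exact absurd hab (hleaf a b ha hb)
    · rintro (⟨rfl, hb⟩ | ⟨rfl, ha⟩)
      · exact hstar b hb
      · exact (hstar a ha).symm
  -- Step D: counting
  have hcardsub : Fintype.card {u // u ≠ v} = Fintype.card V - 1 := by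
    have := Fintype.card_subtype_compl (fun u : V => u = v)
    simpa [Fintype.card_subtype_eq] using this
  have hlow : 2 ≤ Fintype.card {u // u ≠ v} := by rw [hcardsub]; omega
  have hhigh : Fintype.card {u // u ≠ v} ≤ 4 := by
    by_contra hbig
    push_neg at hbig
    obtain ⟨e⟩ : Nonempty (Fin 5 ↪ {u // u ≠ v}) :=
      Function.Embedding.nonempty_of_card_le (by simp only [Fintype.card_fin]; omega)
    refine (not_nonempty_iff.mpr h4) (myK15_emb (l := fun i => (e i).val) ?_ (fun i => (e i).2)
      (fun i => hstar _ (e i).2) (fun i j hij => hleaf _ _ (e i).2 (e j).2))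
    intro i j hij
    exact e.injective (Subtype.ext hij)
  interval_cases hcount : Fintype.card {u // u ≠ v}
  · obtain ⟨e⟩ := myStar_iso h_adj_iff hcount
    obtain ⟨f⟩ := myBridge_iso
    exact hP3 ⟨e.trans f⟩
  · exact hK13 (myStar_iso h_adj_iff hcount)
  · exact hK14 (myStar_iso h_adj_iff hcount)
end
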